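/- Let p be an odd prime and let α ∈ ℍ(ℤ) be a nonzero quaternion with N(α) = p^k and content c(α) = p^ℓ (the content of α is the gcd of its four integer coordinates). Then there exist unique quaternions π₁, …, π_{k−2ℓ} ∈ 𝒫(p) and a unique unit ε ∈ {±1, ±i, ±j, ±k} such that α = p^ℓ · ε · π₁ ⋯ π_{k−2ℓ}, where for every index i with 2 ≤ i ≤ k − 2ℓ one has: π_{i−1} ≠ conj(π_i) if conj(π_i) ∈ 𝒫(p), and π_{i−1} ≠ π_i if conj(π_i) ∉ 𝒫(p). -/

import Mathlib

open Quaternion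

/-- The content of an integral quaternion: the gcd of its four coordinates. -/
def content (a : ℍ[ℤ]) : ℕ :=
  Int.gcd (Int.gcd a.re a.imI) (Int.gcd a.imJ a.imK)

/-- An integral quaternion is primitive if its content is `1`. -/
def Primitive (a : ℍ[ℤ]) : Prop := content a = 1

/-- The eight units of `ℍ[ℤ]`: `±1, ±i, ±j, ±k`. -/
def quatUnits : Set ℍ[ℤ] :=
  {1, -1, ⟨0, 1, 0, 0⟩, ⟨0, -1, 0, 0⟩, ⟨0, 0, 1, 0⟩, ⟨0, 0, -1, 0⟩, ⟨0, 0, 0, 1⟩, ⟨0, 0, 0, -1⟩}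

/-- The distinguished set `𝒫(p)` of quaternions of norm `p` (for an odd prime `p`). -/
def Pset (p : ℕ) : Set ℍ[ℤ] :=
  {π | Primitive π ∧ Quaternion.normSq π = (p : ℤ) ∧
    (if p % 4 = 1 then
      0 < π.re ∧ ∃ β : ℍ[ℤ], π - 1 = 2 * β
    else
      (∃ β : ℍ[ℤ], π - ⟨0, 1, 1, 1⟩ = 2 * β) ∧
        (π.re ≠ 0 → 0 < π.re) ∧ (π.re = 0 → 0 < π.imI))}

lemma qeq_mk_iff (x : ℍ[ℤ]) (a b c d : ℤ) :
    x = ⟨a, b, c, d⟩ ↔ x.re = a ∧ x.imI = b ∧ x.imJ = c ∧ x.imK = d := by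
  constructor
  · rintro rfl; exact ⟨rfl, rfl, rfl, rfl⟩
  · rintro ⟨h1, h2, h3, h4⟩; exact Quaternion.ext _ _ h1 h2 h3 h4

/-- An integral quaternion from its coordinates. -/
def qmk (a b c d : ℤ) : ℍ[ℤ] := ⟨a, b, c, d⟩

@[simp] lemma qmk_re (a b c d : ℤ) : (qmk a b c d).re = a := rfl
@[simp] lemma qmk_imI (a b c d : ℤ) : (qmk a b c d).imI = b := rfl
@[simp] lemma qmk_imJ (a b c d : ℤ) : (qmk a b c d).imJ = c := rfl
@[simp] lemma qmk_imK (a b c d : ℤ) : (qmk a b c d).imK = d := rfl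

lemma mk_eq_qmk (a b c d : ℤ) : (⟨a, b, c, d⟩ : ℍ[ℤ]) = qmk a b c d := rfl

/-- Reduction mod p as a ring hom. -/
def redp (p : ℕ) : ℍ[ℤ] →+* ℍ[ZMod p] where
  toFun x := ⟨(x.re : ZMod p), (x.imI : ZMod p), (x.imJ : ZMod p), (x.imK : ZMod p)⟩
  map_one' := by ext <;> simp
  map_mul' x y := by
    ext <;> simp [Quaternion.re_mul, Quaternion.imI_mul, Quaternion.imJ_mul,
      Quaternion.imK_mul] <;> push_cast
    · erw [Quaternion.re_mul]
    · erw [Quaternion.imI_mul]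
    · erw [Quaternion.imJ_mul]
    · erw [Quaternion.imK_mul]
  map_zero' := by ext <;> simp
  map_add' x y := by ext <;> push_cast <;> simp <;> rfl

@[simp] lemma redp_re (p : ℕ) (x : ℍ[ℤ]) : (redp p x).re = (x.re : ZMod p) := rfl
@[simp] lemma redp_imI (p : ℕ) (x : ℍ[ℤ]) : (redp p x).imI = (x.imI : ZMod p) := rfl
@[simp] lemma redp_imJ (p : ℕ) (x : ℍ[ℤ]) : (redp p x).imJ = (x.imJ : ZMod p) := rfl
@[simp] lemma redp_imK (p : ℕ) (x : ℍ[ℤ]) : (redp p x).imK = (x.imK : ZMod p) := rfl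

lemma redp_eq_zero_iff (p : ℕ) [NeZero p] (x : ℍ[ℤ]) :
    redp p x = 0 ↔ ((p:ℤ) ∣ x.re ∧ (p:ℤ) ∣ x.imI ∧ (p:ℤ) ∣ x.imJ ∧ (p:ℤ) ∣ x.imK) := by
  rw [Quaternion.ext_iff]
  simp [ZMod.intCast_zmod_eq_zero_iff_dvd]

lemma redp_eq_zero_iff' (p : ℕ) [NeZero p] (x : ℍ[ℤ]) :
    redp p x = 0 ↔ ∃ y : ℍ[ℤ], x = (p : ℍ[ℤ]) * y := by
  rw [redp_eq_zero_iff]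
  constructor
  · rintro ⟨⟨a,ha⟩,⟨b,hb⟩,⟨c,hc⟩,⟨d,hd⟩⟩
    exact ⟨⟨a,b,c,d⟩, by
      ext <;> simp [Quaternion.re_mul, Quaternion.imI_mul,
        Quaternion.imJ_mul, Quaternion.imK_mul, ha, hb, hc, hd]
      · erw [Quaternion.re_mul]; simp
      · erw [Quaternion.imI_mul]; simp
      · erw [Quaternion.imJ_mul]; simp
      · erw [Quaternion.imK_mul]; simp⟩
  · rintro ⟨y, rfl⟩
    refine ⟨⟨y.re, ?_⟩, ⟨y.imI, ?_⟩, ⟨y.imJ, ?_⟩, ⟨y.imK, ?_⟩⟩ <;>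
      simp [Quaternion.re_mul, Quaternion.imI_mul, Quaternion.imJ_mul, Quaternion.imK_mul]

lemma normSq_redp (p : ℕ) (x : ℍ[ℤ]) :
    normSq (redp p x) = ((normSq x : ℤ) : ZMod p) := by
  rw [Quaternion.normSq_def', Quaternion.normSq_def']
  push_cast
  rfl

lemma dvd_content_iff (n : ℕ) (x : ℍ[ℤ]) :
    n ∣ content x ↔ ((n:ℤ) ∣ x.re ∧ (n:ℤ) ∣ x.imI ∧ (n:ℤ) ∣ x.imJ ∧ (n:ℤ) ∣ x.imK) := by
  unfold content
  simp only [Int.gcd, Int.natAbs_natCast]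
  rw [Nat.dvd_gcd_iff, Nat.dvd_gcd_iff, Nat.dvd_gcd_iff]
  simp [← Int.natCast_dvd_natCast]
  tauto

lemma natCast_mul_cancel {c : ℕ} (hc : c ≠ 0) {x y : ℍ[ℤ]}
    (h : (c:ℍ[ℤ]) * x = (c:ℍ[ℤ]) * y) : x = y := by
  have hc' : (c:ℤ) ≠ 0 := by exact_mod_cast hc
  ext
  · apply mul_left_cancel₀ hc'
    have := congrArg QuaternionAlgebra.re h
    simpa [Quaternion.re_mul] using this
  · apply mul_left_cancel₀ hc'
    have := congrArg QuaternionAlgebra.imI h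
    simpa [Quaternion.imI_mul] using this
  · apply mul_left_cancel₀ hc'
    have := congrArg QuaternionAlgebra.imJ h
    simpa [Quaternion.imJ_mul] using this
  · apply mul_left_cancel₀ hc'
    have := congrArg QuaternionAlgebra.imK h
    simpa [Quaternion.imK_mul] using this

lemma normSq_eq_zero_iff (x : ℍ[ℤ]) : normSq x = 0 ↔ x = 0 := by
  constructor
  · intro h
    rw [Quaternion.normSq_def'] at h
    ext <;> simp <;>
      nlinarith [sq_nonneg x.re, sq_nonneg x.imI, sq_nonneg x.imJ, sq_nonneg x.imK]
  · rintro rfl; simp [Quaternion.normSq_def']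

lemma content_eq_one_of_pow (p : ℕ) (hp : p.Prime) (n : ℕ) (x : ℍ[ℤ])
    (hN : normSq x = (p:ℤ)^n) (hnd : redp p x ≠ 0) : content x = 1 := by
  haveI : NeZero p := ⟨hp.ne_zero⟩
  have hc : ((content x : ℤ) ∣ x.re ∧ (content x:ℤ) ∣ x.imI ∧ (content x:ℤ) ∣ x.imJ
      ∧ (content x:ℤ) ∣ x.imK) := (dvd_content_iff _ x).mp dvd_rfl
  obtain ⟨⟨a,ha⟩,⟨b,hb⟩,⟨c,hc'⟩,⟨d,hd⟩⟩ := hc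
  have hsq : ((content x : ℤ))^2 ∣ (p:ℤ)^n := by
    rw [← hN, Quaternion.normSq_def', ha, hb, hc', hd]
    exact ⟨a^2+b^2+c^2+d^2, by ring⟩
  have h1 : (content x : ℤ) ∣ (p:ℤ)^n := dvd_trans (dvd_pow_self _ (by norm_num)) hsq
  have h2 : content x ∣ p^n := by exact_mod_cast h1
  obtain ⟨j, hj, hcx⟩ := (Nat.dvd_prime_pow hp).mp h2
  rcases Nat.eq_zero_or_pos j with rfl | hj1
  · simpa using hcx
  · exfalso
    apply hnd
    rw [redp_eq_zero_iff]
    have hpc : p ∣ content x := by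
      rw [hcx]; exact dvd_pow_self p hj1.ne'
    exact (dvd_content_iff p x).mp hpc



section Act
variable {K : Type*} [CommRing K]

def act1 (u v : K) (x : ℍ[K]) (w : K × K) : K :=
  (x.re + x.imI*u - x.imK*v)*w.1 + (x.imI*v + x.imJ + x.imK*u)*w.2

def act2 (u v : K) (x : ℍ[K]) (w : K × K) : K :=
  (x.imI*v - x.imJ + x.imK*u)*w.1 + (x.re - x.imI*u + x.imK*v)*w.2

lemma act1_mul {u v : K} (huv : u^2 + v^2 = -1) (x y : ℍ[K]) (w : K × K) :
    act1 u v (x*y) w = act1 u v x (act1 u v y w, act2 u v y w) := by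
  simp only [act1, act2, Quaternion.re_mul, Quaternion.imI_mul, Quaternion.imJ_mul,
    Quaternion.imK_mul]
  linear_combination (-(x.imK*y.imK*w.1) + x.imK*y.imI*w.2 - x.imI*y.imK*w.2 - x.imI*y.imI*w.1) * huv

lemma act2_mul {u v : K} (huv : u^2 + v^2 = -1) (x y : ℍ[K]) (w : K × K) :
    act2 u v (x*y) w = act2 u v x (act1 u v y w, act2 u v y w) := by
  simp only [act1, act2, Quaternion.re_mul, Quaternion.imI_mul, Quaternion.imJ_mul,
    Quaternion.imK_mul]
  linear_combination (-(x.imK*y.imK*w.2) - x.imK*y.imI*w.1 + x.imI*y.imK*w.1 - x.imI*y.imI*w.2) * huv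

lemma act_det {u v : K} (huv : u^2 + v^2 = -1) (x : ℍ[K]) :
    (x.re + x.imI*u - x.imK*v)*(x.re - x.imI*u + x.imK*v)
      - (x.imI*v + x.imJ + x.imK*u)*(x.imI*v - x.imJ + x.imK*u) = normSq x := by
  rw [Quaternion.normSq_def']
  linear_combination (-x.imK^2 - x.imI^2) * huv

end Act

section ActField
variable {p : ℕ} [Fact p.Prime] {u v : ZMod p}

lemma two_ne_zero_zmod (hodd : Odd p) : (2 : ZMod p) ≠ 0 := by
  have hp := (Fact.out : p.Prime)
  have : ¬ (p ∣ 2) := by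
    intro hd
    have h1 := Nat.le_of_dvd (by norm_num) hd
    have h2 := hp.two_le
    obtain ⟨t, ht⟩ := hodd
    omega
  intro h
  apply this
  have : ((2:ℕ) : ZMod p) = 0 := by exact_mod_cast h
  exact (ZMod.natCast_eq_zero_iff 2 p).mp this

lemma eq_zero_of_act (huv : u^2 + v^2 = -1) (hodd : Odd p) (x : ℍ[ZMod p])
    (h : ∀ w : ZMod p × ZMod p, (act1 u v x w, act2 u v x w) = (0,0)) : x = 0 := by
  have h2 : (2 : ZMod p) ≠ 0 := two_ne_zero_zmod hodd
  have e1 := congrArg Prod.fst (h (1,0))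
  have e2 := congrArg Prod.snd (h (1,0))
  have e3 := congrArg Prod.fst (h (0,1))
  have e4 := congrArg Prod.snd (h (0,1))
  simp only [act1, act2, mul_one, mul_zero, add_zero, zero_add] at e1 e2 e3 e4
  have hre : x.re = 0 := by
    have : (2:ZMod p) * x.re = 0 := by linear_combination e1 + e4
    exact (mul_eq_zero.mp this).resolve_left h2
  have himJ : x.imJ = 0 := by
    have : (2:ZMod p) * x.imJ = 0 := by linear_combination e3 - e2
    exact (mul_eq_zero.mp this).resolve_left h2
  have hbu : x.imI*u - x.imK*v = 0 := by linear_combination e1 - hre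
  have hbv : x.imI*v + x.imK*u = 0 := by linear_combination e3 - himJ
  have himI : x.imI = 0 := by
    have h5 : x.imI * (u^2 + v^2) = 0 := by linear_combination u * hbu + v * hbv
    rw [huv] at h5
    simpa using h5
  have himK : x.imK = 0 := by
    have h5 : x.imK * (u^2 + v^2) = 0 := by linear_combination u * hbv - v * hbu
    rw [huv] at h5
    simpa using h5
  ext <;> simp [hre, himI, himJ, himK]

lemma exists_kernel_vec (huv : u^2 + v^2 = -1) (x : ℍ[ZMod p]) (hx : normSq x = 0) :
    ∃ w : ZMod p × ZMod p, w ≠ 0 ∧ act1 u v x w = 0 ∧ act2 u v x w = 0 := by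
  have hdet : (x.re + x.imI*u - x.imK*v)*(x.re - x.imI*u + x.imK*v)
      - (x.imI*v + x.imJ + x.imK*u)*(x.imI*v - x.imJ + x.imK*u) = 0 := by
    rw [act_det huv x]; exact hx
  by_cases hAB : (x.re + x.imI*u - x.imK*v) = 0 ∧ (x.imI*v + x.imJ + x.imK*u) = 0
  · by_cases hCD : (x.imI*v - x.imJ + x.imK*u) = 0 ∧ (x.re - x.imI*u + x.imK*v) = 0
    · refine ⟨(1,0), by simp, ?_, ?_⟩
      · simp only [act1]; linear_combination hAB.1
      · simp only [act2]; linear_combination hCD.1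
    · refine ⟨(x.re - x.imI*u + x.imK*v, -(x.imI*v - x.imJ + x.imK*u)), ?_, ?_, ?_⟩
      · simp only [Ne, Prod.mk_eq_zero, neg_eq_zero, not_and]
        intro hD0 hC0; exact hCD ⟨hC0, hD0⟩
      · simp only [act1]; linear_combination hdet
      · simp only [act2]; ring
  · refine ⟨(x.imI*v + x.imJ + x.imK*u, -(x.re + x.imI*u - x.imK*v)), ?_, ?_, ?_⟩
    · simp only [Ne, Prod.mk_eq_zero, neg_eq_zero, not_and]
      intro hB0 hA0; exact hAB ⟨hA0, hB0⟩
    · simp only [act1]; ring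
    · simp only [act2]; linear_combination -hdet

lemma quat_ker (huv : u^2 + v^2 = -1) (hodd : Odd p) (a c y x : ℍ[ZMod p]) (ha : a ≠ 0)
    (hay : a = c * y) (hy : normSq y = 0) (hax : a * x = 0) : y * x = 0 := by
  obtain ⟨w, hw0, hw1, hw2⟩ := exists_kernel_vec huv y hy
  have haw1 : act1 u v a w = 0 := by
    rw [hay, act1_mul huv, hw1, hw2]
    simp [act1]
  have haw2 : act2 u v a w = 0 := by
    rw [hay, act2_mul huv, hw1, hw2]
    simp [act2]
  have key : ∀ s : ZMod p × ZMod p, act1 u v a s = 0 → act2 u v a s = 0 →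
      s.1 * w.2 = s.2 * w.1 := by
    intro s hs1 hs2
    by_contra hne
    apply ha
    apply eq_zero_of_act huv hodd
    intro w'
    have hΔ0 : s.1*w.2 - s.2*w.1 ≠ 0 := fun h => hne (by linear_combination h)
    simp only [act1, act2] at hs1 hs2 haw1 haw2 ⊢
    have hA : (a.re + a.imI*u - a.imK*v) * (s.1*w.2 - s.2*w.1) = 0 := by
      linear_combination w.2 * hs1 - s.2 * haw1
    have hB : (a.imI*v + a.imJ + a.imK*u) * (s.1*w.2 - s.2*w.1) = 0 := by
      linear_combination -w.1 * hs1 + s.1 * haw1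
    have hC : (a.imI*v - a.imJ + a.imK*u) * (s.1*w.2 - s.2*w.1) = 0 := by
      linear_combination w.2 * hs2 - s.2 * haw2
    have hD : (a.re - a.imI*u + a.imK*v) * (s.1*w.2 - s.2*w.1) = 0 := by
      linear_combination -w.1 * hs2 + s.1 * haw2
    have hA0 := (mul_eq_zero.mp hA).resolve_right hΔ0
    have hB0 := (mul_eq_zero.mp hB).resolve_right hΔ0
    have hC0 := (mul_eq_zero.mp hC).resolve_right hΔ0
    have hD0 := (mul_eq_zero.mp hD).resolve_right hΔ0
    rw [hA0, hB0, hC0, hD0]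
    simp
  have hw1' := hw1; have hw2' := hw2
  simp only [act1] at hw1'
  simp only [act2] at hw2'
  have hwne : w.1 ≠ 0 ∨ w.2 ≠ 0 := by
    by_contra hcon
    push_neg at hcon
    exact hw0 (Prod.ext hcon.1 hcon.2)
  have main : ∀ s : ZMod p × ZMod p, act1 u v a s = 0 → act2 u v a s = 0 →
      act1 u v y s = 0 ∧ act2 u v y s = 0 := by
    intro s hs1 hs2
    have hdep := key s hs1 hs2
    have hyu1a : w.1 * act1 u v y s = 0 := by
      simp only [act1]
      linear_combination s.1 * hw1' - (y.imI*v + y.imJ + y.imK*u) * hdep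
    have hyu1b : w.2 * act1 u v y s = 0 := by
      simp only [act1]
      linear_combination s.2 * hw1' + (y.re + y.imI*u - y.imK*v) * hdep
    have hyu2a : w.1 * act2 u v y s = 0 := by
      simp only [act2]
      linear_combination s.1 * hw2' - (y.re - y.imI*u + y.imK*v) * hdep
    have hyu2b : w.2 * act2 u v y s = 0 := by
      simp only [act2]
      linear_combination s.2 * hw2' + (y.imI*v - y.imJ + y.imK*u) * hdep
    constructor
    · rcases hwne with h | h
      · exact (mul_eq_zero.mp hyu1a).resolve_left h
      · exact (mul_eq_zero.mp hyu1b).resolve_left h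
    · rcases hwne with h | h
      · exact (mul_eq_zero.mp hyu2a).resolve_left h
      · exact (mul_eq_zero.mp hyu2b).resolve_left h
  apply eq_zero_of_act huv hodd
  intro vv
  have hau1 : act1 u v a (act1 u v x vv, act2 u v x vv) = 0 := by
    rw [← act1_mul huv, hax]
    simp [act1]
  have hau2 : act2 u v a (act1 u v x vv, act2 u v x vv) = 0 := by
    rw [← act2_mul huv, hax]
    simp [act2]
  obtain ⟨hy1, hy2⟩ := main _ hau1 hau2
  rw [act1_mul huv, act2_mul huv, hy1, hy2]

end ActField


lemma mem_quatUnits_iff (x : ℍ[ℤ]) : x ∈ quatUnits ↔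
    (x.re = 1 ∧ x.imI = 0 ∧ x.imJ = 0 ∧ x.imK = 0) ∨
    (x.re = -1 ∧ x.imI = 0 ∧ x.imJ = 0 ∧ x.imK = 0) ∨
    (x.re = 0 ∧ x.imI = 1 ∧ x.imJ = 0 ∧ x.imK = 0) ∨
    (x.re = 0 ∧ x.imI = -1 ∧ x.imJ = 0 ∧ x.imK = 0) ∨
    (x.re = 0 ∧ x.imI = 0 ∧ x.imJ = 1 ∧ x.imK = 0) ∨
    (x.re = 0 ∧ x.imI = 0 ∧ x.imJ = -1 ∧ x.imK = 0) ∨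
    (x.re = 0 ∧ x.imI = 0 ∧ x.imJ = 0 ∧ x.imK = 1) ∨
    (x.re = 0 ∧ x.imI = 0 ∧ x.imJ = 0 ∧ x.imK = -1) := by
  unfold quatUnits
  show x = 1 ∨ x = -1 ∨ x = ⟨0, 1, 0, 0⟩ ∨ x = ⟨0, -1, 0, 0⟩ ∨ x = ⟨0, 0, 1, 0⟩ ∨
    x = ⟨0, 0, -1, 0⟩ ∨ x = ⟨0, 0, 0, 1⟩ ∨ x = ⟨0, 0, 0, -1⟩ ↔ _
  rw [Quaternion.ext_iff, Quaternion.ext_iff, qeq_mk_iff, qeq_mk_iff, qeq_mk_iff, qeq_mk_iff,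
    qeq_mk_iff, qeq_mk_iff]
  norm_num

lemma normSq_one_iff_quatUnits (x : ℍ[ℤ]) : normSq x = 1 ↔ x ∈ quatUnits := by
  rw [mem_quatUnits_iff]
  constructor
  · intro h
    rw [Quaternion.normSq_def'] at h
    have ha1 : -1 ≤ x.re ∧ x.re ≤ 1 := by
      constructor <;> nlinarith [sq_nonneg x.imI, sq_nonneg x.imJ, sq_nonneg x.imK, sq_nonneg (x.re+1), sq_nonneg (x.re-1)]
    have hb1 : -1 ≤ x.imI ∧ x.imI ≤ 1 := by
      constructor <;> nlinarith [sq_nonneg x.re, sq_nonneg x.imJ, sq_nonneg x.imK, sq_nonneg (x.imI+1), sq_nonneg (x.imI-1)]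
    have hc1 : -1 ≤ x.imJ ∧ x.imJ ≤ 1 := by
      constructor <;> nlinarith [sq_nonneg x.re, sq_nonneg x.imI, sq_nonneg x.imK, sq_nonneg (x.imJ+1), sq_nonneg (x.imJ-1)]
    have hd1 : -1 ≤ x.imK ∧ x.imK ≤ 1 := by
      constructor <;> nlinarith [sq_nonneg x.re, sq_nonneg x.imI, sq_nonneg x.imJ, sq_nonneg (x.imK+1), sq_nonneg (x.imK-1)]
    obtain ⟨ha2, ha3⟩ := ha1; obtain ⟨hb2, hb3⟩ := hb1
    obtain ⟨hc2, hc3⟩ := hc1; obtain ⟨hd2, hd3⟩ := hd1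
    set a := x.re; set b := x.imI; set c := x.imJ; set d := x.imK
    interval_cases a <;> interval_cases b <;> interval_cases c <;> interval_cases d <;>
      norm_num at h <;> norm_num
  · intro h
    rw [Quaternion.normSq_def']
    rcases h with ⟨h1,h2,h3,h4⟩ | ⟨h1,h2,h3,h4⟩ | ⟨h1,h2,h3,h4⟩ | ⟨h1,h2,h3,h4⟩ |
      ⟨h1,h2,h3,h4⟩ | ⟨h1,h2,h3,h4⟩ | ⟨h1,h2,h3,h4⟩ | ⟨h1,h2,h3,h4⟩ <;>
      rw [h1,h2,h3,h4] <;> norm_num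

lemma quatUnits_star_mul (ε : ℍ[ℤ]) (h : ε ∈ quatUnits) : ε * star ε = 1 ∧ star ε * ε = 1 := by
  have h1 : normSq ε = 1 := (normSq_one_iff_quatUnits ε).mpr h
  constructor
  · rw [Quaternion.self_mul_star, h1]; norm_cast
  · rw [Quaternion.star_mul_self, h1]; norm_cast

lemma neg_mem_quatUnits {ε : ℍ[ℤ]} (h : ε ∈ quatUnits) : -ε ∈ quatUnits := by
  rw [← normSq_one_iff_quatUnits] at h ⊢
  rw [Quaternion.normSq_neg]
  exact h


lemma dvd_content_iff' (n : ℕ) (x : ℍ[ℤ]) :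
    n ∣ content x ↔ ((n:ℤ) ∣ x.re ∧ (n:ℤ) ∣ x.imI ∧ (n:ℤ) ∣ x.imJ ∧ (n:ℤ) ∣ x.imK) := by
  unfold content
  simp only [Int.gcd, Int.natAbs_natCast]
  rw [Nat.dvd_gcd_iff, Nat.dvd_gcd_iff, Nat.dvd_gcd_iff]
  simp [← Int.natCast_dvd_natCast]
  tauto

lemma content_eq_one_of_normSq_prime {p : ℕ} (hp : p.Prime) {x : ℍ[ℤ]}
    (hN : normSq x = (p:ℤ)) : content x = 1 := by
  obtain ⟨⟨a,ha⟩,⟨b,hb⟩,⟨c,hc'⟩,⟨d,hd⟩⟩ := (dvd_content_iff' (content x) x).mp dvd_rfl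
  have hsq : ((content x : ℤ))^2 ∣ (p:ℤ) := by
    rw [← hN, Quaternion.normSq_def', ha, hb, hc', hd]
    exact ⟨a^2+b^2+c^2+d^2, by ring⟩
  have h2 : (content x)^2 ∣ p := by exact_mod_cast hsq
  rcases (Nat.Prime.eq_one_or_self_of_dvd hp _ h2) with h | h
  · by_contra hne
    have : content x = 0 ∨ content x ≥ 2 := by omega
    rcases this with h0 | hge
    · rw [h0] at h; norm_num at h
    · nlinarith [h]
  · exfalso
    have hc2 : content x ∣ p := dvd_trans (dvd_pow_self _ (by norm_num)) h2
    rcases (Nat.Prime.eq_one_or_self_of_dvd hp _ hc2) with h1 | h1 <;>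
      rw [h1] at h <;> nlinarith [hp.two_le]

lemma sq_mod_four (a : ℤ) : ∃ k, (a^2 = 4*k ∧ Even a) ∨ (a^2 = 4*k + 1 ∧ Odd a) := by
  rcases Int.even_or_odd a with ⟨t, rfl⟩ | ⟨t, rfl⟩
  · exact ⟨t^2, Or.inl ⟨by ring, ⟨t, rfl⟩⟩⟩
  · exact ⟨t^2 + t, Or.inr ⟨by ring, ⟨t, rfl⟩⟩⟩

lemma parity_one {p : ℕ} (h4 : p % 4 = 1) {x : ℍ[ℤ]} (hN : normSq x = (p:ℤ)) :
    (Odd x.re ∧ Even x.imI ∧ Even x.imJ ∧ Even x.imK) ∨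
    (Even x.re ∧ Odd x.imI ∧ Even x.imJ ∧ Even x.imK) ∨
    (Even x.re ∧ Even x.imI ∧ Odd x.imJ ∧ Even x.imK) ∨
    (Even x.re ∧ Even x.imI ∧ Even x.imJ ∧ Odd x.imK) := by
  rw [Quaternion.normSq_def'] at hN
  have hm : (p:ℤ) % 4 = 1 := by omega
  obtain ⟨ka, hka⟩ := sq_mod_four x.re
  obtain ⟨kb, hkb⟩ := sq_mod_four x.imI
  obtain ⟨kc, hkc⟩ := sq_mod_four x.imJ
  obtain ⟨kd, hkd⟩ := sq_mod_four x.imK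
  rcases hka with ⟨e1,p1⟩|⟨e1,p1⟩ <;> rcases hkb with ⟨e2,p2⟩|⟨e2,p2⟩ <;>
    rcases hkc with ⟨e3,p3⟩|⟨e3,p3⟩ <;> rcases hkd with ⟨e4,p4⟩|⟨e4,p4⟩ <;>
    first
      | (exact Or.inl ⟨p1,p2,p3,p4⟩)
      | (exact Or.inr (Or.inl ⟨p1,p2,p3,p4⟩))
      | (exact Or.inr (Or.inr (Or.inl ⟨p1,p2,p3,p4⟩)))
      | (exact Or.inr (Or.inr (Or.inr ⟨p1,p2,p3,p4⟩)))
      | omega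

lemma parity_three {p : ℕ} (h4 : p % 4 = 3) {x : ℍ[ℤ]} (hN : normSq x = (p:ℤ)) :
    (Even x.re ∧ Odd x.imI ∧ Odd x.imJ ∧ Odd x.imK) ∨
    (Odd x.re ∧ Even x.imI ∧ Odd x.imJ ∧ Odd x.imK) ∨
    (Odd x.re ∧ Odd x.imI ∧ Even x.imJ ∧ Odd x.imK) ∨
    (Odd x.re ∧ Odd x.imI ∧ Odd x.imJ ∧ Even x.imK) := by
  rw [Quaternion.normSq_def'] at hN
  have hm : (p:ℤ) % 4 = 3 := by omega
  obtain ⟨ka, hka⟩ := sq_mod_four x.re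
  obtain ⟨kb, hkb⟩ := sq_mod_four x.imI
  obtain ⟨kc, hkc⟩ := sq_mod_four x.imJ
  obtain ⟨kd, hkd⟩ := sq_mod_four x.imK
  rcases hka with ⟨e1,p1⟩|⟨e1,p1⟩ <;> rcases hkb with ⟨e2,p2⟩|⟨e2,p2⟩ <;>
    rcases hkc with ⟨e3,p3⟩|⟨e3,p3⟩ <;> rcases hkd with ⟨e4,p4⟩|⟨e4,p4⟩ <;>
    first
      | (exact Or.inl ⟨p1,p2,p3,p4⟩)
      | (exact Or.inr (Or.inl ⟨p1,p2,p3,p4⟩))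
      | (exact Or.inr (Or.inr (Or.inl ⟨p1,p2,p3,p4⟩)))
      | (exact Or.inr (Or.inr (Or.inr ⟨p1,p2,p3,p4⟩)))
      | omega

lemma exists_half (z : ℍ[ℤ]) (h1 : Even z.re) (h2 : Even z.imI) (h3 : Even z.imJ)
    (h4 : Even z.imK) : ∃ β : ℍ[ℤ], z = 2 * β := by
  obtain ⟨r1, hr1⟩ := h1; obtain ⟨r2, hr2⟩ := h2
  obtain ⟨r3, hr3⟩ := h3; obtain ⟨r4, hr4⟩ := h4
  refine ⟨qmk r1 r2 r3 r4, ?_⟩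
  rw [two_mul]
  ext <;> simp [Quaternion.re_add, Quaternion.imI_add, Quaternion.imJ_add, Quaternion.imK_add] <;>
    omega

lemma mem_Pset_one {p : ℕ} (hp : p.Prime) (h4 : p % 4 = 1) (π : ℍ[ℤ])
    (hN : normSq π = (p:ℤ)) (hre : 0 < π.re) (h1 : Odd π.re) (h2 : Even π.imI)
    (h3 : Even π.imJ) (h5 : Even π.imK) : π ∈ Pset p := by
  refine ⟨content_eq_one_of_normSq_prime hp hN, hN, ?_⟩
  rw [if_pos h4]
  refine ⟨hre, exists_half _ ?_ ?_ ?_ ?_⟩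
  · rw [Quaternion.re_sub, Quaternion.re_one]
    obtain ⟨t, ht⟩ := h1; exact ⟨t, by omega⟩
  · rw [Quaternion.imI_sub, Quaternion.imI_one]; simpa using h2
  · rw [Quaternion.imJ_sub, Quaternion.imJ_one]; simpa using h3
  · rw [Quaternion.imK_sub, Quaternion.imK_one]; simpa using h5

lemma mem_Pset_three {p : ℕ} (hp : p.Prime) (h4 : p % 4 ≠ 1) (π : ℍ[ℤ])
    (hN : normSq π = (p:ℤ)) (hs1 : π.re ≠ 0 → 0 < π.re) (hs2 : π.re = 0 → 0 < π.imI)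
    (h1 : Even π.re) (h2 : Odd π.imI) (h3 : Odd π.imJ) (h5 : Odd π.imK) : π ∈ Pset p := by
  refine ⟨content_eq_one_of_normSq_prime hp hN, hN, ?_⟩
  rw [if_neg h4, mk_eq_qmk]
  refine ⟨exists_half _ ?_ ?_ ?_ ?_, hs1, hs2⟩
  · rw [Quaternion.re_sub]; simpa using h1
  · rw [Quaternion.imI_sub]
    obtain ⟨t, ht⟩ := h2; exact ⟨t, by simp; omega⟩
  · rw [Quaternion.imJ_sub]
    obtain ⟨t, ht⟩ := h3; exact ⟨t, by simp; omega⟩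
  · rw [Quaternion.imK_sub]
    obtain ⟨t, ht⟩ := h5; exact ⟨t, by simp; omega⟩

lemma Pset_normSq {p : ℕ} {π : ℍ[ℤ]} (h : π ∈ Pset p) : normSq π = (p:ℤ) := h.2.1
lemma Pset_prim {p : ℕ} {π : ℍ[ℤ]} (h : π ∈ Pset p) : content π = 1 := h.1

lemma Pset_parity_one {p : ℕ} (h4 : p % 4 = 1) {π : ℍ[ℤ]} (h : π ∈ Pset p) :
    Odd π.re ∧ Even π.imI ∧ Even π.imJ ∧ Even π.imK := by
  obtain ⟨-, -, hcong⟩ := h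
  rw [if_pos h4] at hcong
  obtain ⟨-, β, hβ⟩ := hcong
  have e1 := congrArg QuaternionAlgebra.re hβ
  have e2 := congrArg QuaternionAlgebra.imI hβ
  have e3 := congrArg QuaternionAlgebra.imJ hβ
  have e4 := congrArg QuaternionAlgebra.imK hβ
  rw [two_mul] at e1 e2 e3 e4
  simp only [Quaternion.re_sub, Quaternion.imI_sub, Quaternion.imJ_sub, Quaternion.imK_sub,
    Quaternion.re_one, Quaternion.imI_one, Quaternion.imJ_one, Quaternion.imK_one,
    Quaternion.re_add, Quaternion.imI_add, Quaternion.imJ_add, Quaternion.imK_add] at e1 e2 e3 e4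
  exact ⟨⟨β.re, by omega⟩, ⟨β.imI, by omega⟩, ⟨β.imJ, by omega⟩, ⟨β.imK, by omega⟩⟩

lemma Pset_parity_three {p : ℕ} (h4 : p % 4 ≠ 1) {π : ℍ[ℤ]} (h : π ∈ Pset p) :
    Even π.re ∧ Odd π.imI ∧ Odd π.imJ ∧ Odd π.imK := by
  obtain ⟨-, -, hcong⟩ := h
  rw [if_neg h4, mk_eq_qmk] at hcong
  obtain ⟨⟨β, hβ⟩, -, -⟩ := hcong
  have e1 := congrArg QuaternionAlgebra.re hβ
  have e2 := congrArg QuaternionAlgebra.imI hβ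
  have e3 := congrArg QuaternionAlgebra.imJ hβ
  have e4 := congrArg QuaternionAlgebra.imK hβ
  rw [two_mul] at e1 e2 e3 e4
  simp only [Quaternion.re_sub, Quaternion.imI_sub, Quaternion.imJ_sub, Quaternion.imK_sub,
    Quaternion.re_add, Quaternion.imI_add, Quaternion.imJ_add, Quaternion.imK_add] at e1 e2 e3 e4
  have f1 : π.re = β.re + β.re := by simpa using e1
  have f2 : π.imI - 1 = β.imI + β.imI := by simpa using e2
  have f3 : π.imJ - 1 = β.imJ + β.imJ := by simpa using e3
  have f4 : π.imK - 1 = β.imK + β.imK := by simpa using e4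
  exact ⟨⟨β.re, f1⟩, ⟨β.imI, by omega⟩, ⟨β.imJ, by omega⟩, ⟨β.imK, by omega⟩⟩

lemma Pset_sign_one {p : ℕ} (h4 : p % 4 = 1) {π : ℍ[ℤ]} (h : π ∈ Pset p) : 0 < π.re := by
  obtain ⟨-, -, hcong⟩ := h
  rw [if_pos h4] at hcong
  exact hcong.1

lemma Pset_sign_three {p : ℕ} (h4 : p % 4 ≠ 1) {π : ℍ[ℤ]} (h : π ∈ Pset p) :
    (π.re ≠ 0 → 0 < π.re) ∧ (π.re = 0 → 0 < π.imI) := by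
  obtain ⟨-, -, hcong⟩ := h
  rw [if_neg h4] at hcong
  exact hcong.2


section Normalization
variable {p : ℕ}

lemma quat_eq_unit_mul (ε π x : ℍ[ℤ])
    (h1 : x.re = (ε*π).re) (h2 : x.imI = (ε*π).imI) (h3 : x.imJ = (ε*π).imJ)
    (h4 : x.imK = (ε*π).imK) : x = ε * π := by
  ext <;> assumption

set_option maxHeartbeats 2000000 in
lemma exists_unit_factor (hp : p.Prime) (hodd : Odd p) (x : ℍ[ℤ])
    (hN : normSq x = (p:ℤ)) : ∃ ε ∈ quatUnits, ∃ π ∈ Pset p, x = ε * π := by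
  have hNe : x.re^2 + x.imI^2 + x.imJ^2 + x.imK^2 = (p:ℤ) := by
    rw [← Quaternion.normSq_def', hN]
  have hmod : p % 4 = 1 ∨ p % 4 = 3 := by
    obtain ⟨t, ht⟩ := hodd; omega
  rcases hmod with h4 | h4
  · -- p ≡ 1 mod 4 : exactly one odd coordinate
    rcases parity_one h4 hN with ⟨o1,e2,e3,e4⟩ | ⟨e1,o2,e3,e4⟩ | ⟨e1,e2,o3,e4⟩ | ⟨e1,e2,e3,o4⟩
    · rcases lt_trichotomy x.re 0 with hs | hs | hs
      · refine ⟨qmk (-1) 0 0 0, by rw [mem_quatUnits_iff]; norm_num,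
          qmk (-x.re) (-x.imI) (-x.imJ) (-x.imK), mem_Pset_one hp h4 _ ?_ (by simpa using hs)
            o1.neg e2.neg e3.neg e4.neg, ?_⟩
        · rw [Quaternion.normSq_def']
          show (-x.re)^2 + (-x.imI)^2 + (-x.imJ)^2 + (-x.imK)^2 = (p:ℤ)
          linear_combination hNe
        · apply quat_eq_unit_mul <;>
            simp [Quaternion.re_mul, Quaternion.imI_mul, Quaternion.imJ_mul, Quaternion.imK_mul]
      · exfalso; exact (Int.not_odd_iff_even.mpr (by rw [hs]; exact Even.zero)) o1
      · refine ⟨qmk 1 0 0 0, by rw [mem_quatUnits_iff]; norm_num, x,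
          mem_Pset_one hp h4 _ hN hs o1 e2 e3 e4, ?_⟩
        apply quat_eq_unit_mul <;>
          simp [Quaternion.re_mul, Quaternion.imI_mul, Quaternion.imJ_mul, Quaternion.imK_mul]
    · rcases lt_trichotomy x.imI 0 with hs | hs | hs
      · refine ⟨qmk 0 (-1) 0 0, by rw [mem_quatUnits_iff]; norm_num,
          qmk (-x.imI) x.re (-x.imK) x.imJ, mem_Pset_one hp h4 _ ?_ (by simpa using hs)
            o2.neg e1 e4.neg e3, ?_⟩
        · rw [Quaternion.normSq_def']
          show (-x.imI)^2 + (x.re)^2 + (-x.imK)^2 + (x.imJ)^2 = (p:ℤ)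
          linear_combination hNe
        · apply quat_eq_unit_mul <;>
            simp [Quaternion.re_mul, Quaternion.imI_mul, Quaternion.imJ_mul, Quaternion.imK_mul] <;>
            ring
      · exfalso; exact (Int.not_odd_iff_even.mpr (by rw [hs]; exact Even.zero)) o2
      · refine ⟨qmk 0 1 0 0, by rw [mem_quatUnits_iff]; norm_num,
          qmk x.imI (-x.re) x.imK (-x.imJ), mem_Pset_one hp h4 _ ?_ hs o2 e1.neg e4 e3.neg, ?_⟩
        · rw [Quaternion.normSq_def']
          show (x.imI)^2 + (-x.re)^2 + (x.imK)^2 + (-x.imJ)^2 = (p:ℤ)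
          linear_combination hNe
        · apply quat_eq_unit_mul <;>
            simp [Quaternion.re_mul, Quaternion.imI_mul, Quaternion.imJ_mul, Quaternion.imK_mul] <;>
            ring
    · rcases lt_trichotomy x.imJ 0 with hs | hs | hs
      · refine ⟨qmk 0 0 (-1) 0, by rw [mem_quatUnits_iff]; norm_num,
          qmk (-x.imJ) x.imK x.re (-x.imI), mem_Pset_one hp h4 _ ?_ (by simpa using hs)
            o3.neg e4 e1 e2.neg, ?_⟩
        · rw [Quaternion.normSq_def']
          show (-x.imJ)^2 + (x.imK)^2 + (x.re)^2 + (-x.imI)^2 = (p:ℤ)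
          linear_combination hNe
        · apply quat_eq_unit_mul <;>
            simp [Quaternion.re_mul, Quaternion.imI_mul, Quaternion.imJ_mul, Quaternion.imK_mul] <;>
            ring
      · exfalso; exact (Int.not_odd_iff_even.mpr (by rw [hs]; exact Even.zero)) o3
      · refine ⟨qmk 0 0 1 0, by rw [mem_quatUnits_iff]; norm_num,
          qmk x.imJ (-x.imK) (-x.re) x.imI, mem_Pset_one hp h4 _ ?_ hs o3 e4.neg e1.neg e2, ?_⟩
        · rw [Quaternion.normSq_def']
          show (x.imJ)^2 + (-x.imK)^2 + (-x.re)^2 + (x.imI)^2 = (p:ℤ)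
          linear_combination hNe
        · apply quat_eq_unit_mul <;>
            simp [Quaternion.re_mul, Quaternion.imI_mul, Quaternion.imJ_mul, Quaternion.imK_mul] <;>
            ring
    · rcases lt_trichotomy x.imK 0 with hs | hs | hs
      · refine ⟨qmk 0 0 0 (-1), by rw [mem_quatUnits_iff]; norm_num,
          qmk (-x.imK) (-x.imJ) x.imI x.re, mem_Pset_one hp h4 _ ?_ (by simpa using hs)
            o4.neg e3.neg e2 e1, ?_⟩
        · rw [Quaternion.normSq_def']
          show (-x.imK)^2 + (-x.imJ)^2 + (x.imI)^2 + (x.re)^2 = (p:ℤ)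
          linear_combination hNe
        · apply quat_eq_unit_mul <;>
            simp [Quaternion.re_mul, Quaternion.imI_mul, Quaternion.imJ_mul, Quaternion.imK_mul] <;>
            ring
      · exfalso; exact (Int.not_odd_iff_even.mpr (by rw [hs]; exact Even.zero)) o4
      · refine ⟨qmk 0 0 0 1, by rw [mem_quatUnits_iff]; norm_num,
          qmk x.imK x.imJ (-x.imI) (-x.re), mem_Pset_one hp h4 _ ?_ hs o4 e3 e2.neg e1.neg, ?_⟩
        · rw [Quaternion.normSq_def']
          show (x.imK)^2 + (x.imJ)^2 + (-x.imI)^2 + (-x.re)^2 = (p:ℤ)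
          linear_combination hNe
        · apply quat_eq_unit_mul <;>
            simp [Quaternion.re_mul, Quaternion.imI_mul, Quaternion.imJ_mul, Quaternion.imK_mul] <;>
            ring
  · -- p ≡ 3 mod 4 : exactly one even coordinate
    have h4' : p % 4 ≠ 1 := by omega
    rcases parity_three h4 hN with ⟨e1,o2,o3,o4⟩ | ⟨o1,e2,o3,o4⟩ | ⟨o1,o2,e3,o4⟩ | ⟨o1,o2,o3,e4⟩
    · -- re even, candidates ±x
      rcases lt_trichotomy x.re 0 with hs | hs | hs
      · refine ⟨qmk (-1) 0 0 0, by rw [mem_quatUnits_iff]; norm_num,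
          qmk (-x.re) (-x.imI) (-x.imJ) (-x.imK), mem_Pset_three hp h4' _ ?_
            (fun _ => by simpa using hs) (fun h => absurd (by simpa using h) hs.ne)
            e1.neg o2.neg o3.neg o4.neg, ?_⟩
        · rw [Quaternion.normSq_def']
          show (-x.re)^2 + (-x.imI)^2 + (-x.imJ)^2 + (-x.imK)^2 = (p:ℤ)
          linear_combination hNe
        · apply quat_eq_unit_mul <;>
            simp [Quaternion.re_mul, Quaternion.imI_mul, Quaternion.imJ_mul, Quaternion.imK_mul]
      · -- re = 0 : sign by imI (odd, nonzero)
        rcases lt_trichotomy x.imI 0 with hs2 | hs2 | hs2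
        · refine ⟨qmk (-1) 0 0 0, by rw [mem_quatUnits_iff]; norm_num,
            qmk (-x.re) (-x.imI) (-x.imJ) (-x.imK), mem_Pset_three hp h4' _ ?_
              (fun h => absurd (by simpa using hs) h) (fun _ => by simpa using hs2)
              e1.neg o2.neg o3.neg o4.neg, ?_⟩
          · rw [Quaternion.normSq_def']
            show (-x.re)^2 + (-x.imI)^2 + (-x.imJ)^2 + (-x.imK)^2 = (p:ℤ)
            linear_combination hNe
          · apply quat_eq_unit_mul <;>
              simp [Quaternion.re_mul, Quaternion.imI_mul, Quaternion.imJ_mul, Quaternion.imK_mul]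
        · exfalso; exact (Int.not_odd_iff_even.mpr (by rw [hs2]; exact Even.zero)) o2
        · refine ⟨qmk 1 0 0 0, by rw [mem_quatUnits_iff]; norm_num, x,
            mem_Pset_three hp h4' _ hN (fun h => absurd hs h) (fun _ => hs2) e1 o2 o3 o4, ?_⟩
          apply quat_eq_unit_mul <;>
            simp [Quaternion.re_mul, Quaternion.imI_mul, Quaternion.imJ_mul, Quaternion.imK_mul]
      · refine ⟨qmk 1 0 0 0, by rw [mem_quatUnits_iff]; norm_num, x,
          mem_Pset_three hp h4' _ hN (fun _ => hs) (fun h => absurd h hs.ne') e1 o2 o3 o4, ?_⟩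
        apply quat_eq_unit_mul <;>
          simp [Quaternion.re_mul, Quaternion.imI_mul, Quaternion.imJ_mul, Quaternion.imK_mul]
    · -- imI even: candidates ∓i x : (b,-a,d,-c) etc with b := x.imI
      rcases lt_trichotomy x.imI 0 with hs | hs | hs
      · refine ⟨qmk 0 (-1) 0 0, by rw [mem_quatUnits_iff]; norm_num,
          qmk (-x.imI) x.re (-x.imK) x.imJ, mem_Pset_three hp h4' _ ?_
            (fun _ => by simpa using hs) (fun h => absurd (by simpa using h) hs.ne)
            e2.neg o1 o4.neg o3, ?_⟩
        · rw [Quaternion.normSq_def']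
          show (-x.imI)^2 + (x.re)^2 + (-x.imK)^2 + (x.imJ)^2 = (p:ℤ)
          linear_combination hNe
        · apply quat_eq_unit_mul <;>
            simp [Quaternion.re_mul, Quaternion.imI_mul, Quaternion.imJ_mul, Quaternion.imK_mul] <;>
            ring
      · rcases lt_trichotomy x.re 0 with hs2 | hs2 | hs2
        · -- imI = 0, re < 0 : π = (b, -a, d, -c) has imI = -a > 0 : ε = i
          refine ⟨qmk 0 1 0 0, by rw [mem_quatUnits_iff]; norm_num,
            qmk x.imI (-x.re) x.imK (-x.imJ), mem_Pset_three hp h4' _ ?_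
              (fun h => absurd (by simpa using hs) h) (fun _ => by simpa using hs2)
              e2 o1.neg o4 o3.neg, ?_⟩
          · rw [Quaternion.normSq_def']
            show (x.imI)^2 + (-x.re)^2 + (x.imK)^2 + (-x.imJ)^2 = (p:ℤ)
            linear_combination hNe
          · apply quat_eq_unit_mul <;>
              simp [Quaternion.re_mul, Quaternion.imI_mul, Quaternion.imJ_mul, Quaternion.imK_mul] <;>
              ring
        · exfalso; exact (Int.not_odd_iff_even.mpr (by rw [hs2]; exact Even.zero)) o1
        · refine ⟨qmk 0 (-1) 0 0, by rw [mem_quatUnits_iff]; norm_num,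
            qmk (-x.imI) x.re (-x.imK) x.imJ, mem_Pset_three hp h4' _ ?_
              (fun h => absurd (by simpa using hs) h) (fun _ => by simpa using hs2)
              e2.neg o1 o4.neg o3, ?_⟩
          · rw [Quaternion.normSq_def']
            show (-x.imI)^2 + (x.re)^2 + (-x.imK)^2 + (x.imJ)^2 = (p:ℤ)
            linear_combination hNe
          · apply quat_eq_unit_mul <;>
              simp [Quaternion.re_mul, Quaternion.imI_mul, Quaternion.imJ_mul, Quaternion.imK_mul] <;>
              ring
      · refine ⟨qmk 0 1 0 0, by rw [mem_quatUnits_iff]; norm_num,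
          qmk x.imI (-x.re) x.imK (-x.imJ), mem_Pset_three hp h4' _ ?_
            (fun _ => hs) (fun h => absurd h hs.ne') e2 o1.neg o4 o3.neg, ?_⟩
        · rw [Quaternion.normSq_def']
          show (x.imI)^2 + (-x.re)^2 + (x.imK)^2 + (-x.imJ)^2 = (p:ℤ)
          linear_combination hNe
        · apply quat_eq_unit_mul <;>
            simp [Quaternion.re_mul, Quaternion.imI_mul, Quaternion.imJ_mul, Quaternion.imK_mul] <;>
            ring
    · -- imJ even: candidates ∓j x : -j*x = (c, -d, -a, b), j*x = (-c, d, a, -b)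
      rcases lt_trichotomy x.imJ 0 with hs | hs | hs
      · refine ⟨qmk 0 0 (-1) 0, by rw [mem_quatUnits_iff]; norm_num,
          qmk (-x.imJ) x.imK x.re (-x.imI), mem_Pset_three hp h4' _ ?_
            (fun _ => by simpa using hs) (fun h => absurd (by simpa using h) hs.ne)
            e3.neg o4 o1 o2.neg, ?_⟩
        · rw [Quaternion.normSq_def']
          show (-x.imJ)^2 + (x.imK)^2 + (x.re)^2 + (-x.imI)^2 = (p:ℤ)
          linear_combination hNe
        · apply quat_eq_unit_mul <;>
            simp [Quaternion.re_mul, Quaternion.imI_mul, Quaternion.imJ_mul, Quaternion.imK_mul] <;>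
            ring
      · rcases lt_trichotomy x.imK 0 with hs2 | hs2 | hs2
        · -- imJ = 0, imK < 0 : want imI-coord > 0: candidates have imI = ±d; pick imI = -d : π = (c,-d,-a,b) : ε = j
          refine ⟨qmk 0 0 1 0, by rw [mem_quatUnits_iff]; norm_num,
            qmk x.imJ (-x.imK) (-x.re) x.imI, mem_Pset_three hp h4' _ ?_
              (fun h => absurd (by simpa using hs) h) (fun _ => by simpa using hs2)
              e3 o4.neg o1.neg o2, ?_⟩
          · rw [Quaternion.normSq_def']
            show (x.imJ)^2 + (-x.imK)^2 + (-x.re)^2 + (x.imI)^2 = (p:ℤ)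
            linear_combination hNe
          · apply quat_eq_unit_mul <;>
              simp [Quaternion.re_mul, Quaternion.imI_mul, Quaternion.imJ_mul, Quaternion.imK_mul] <;>
              ring
        · exfalso; exact (Int.not_odd_iff_even.mpr (by rw [hs2]; exact Even.zero)) o4
        · refine ⟨qmk 0 0 (-1) 0, by rw [mem_quatUnits_iff]; norm_num,
            qmk (-x.imJ) x.imK x.re (-x.imI), mem_Pset_three hp h4' _ ?_
              (fun h => absurd (by simpa using hs) h) (fun _ => by simpa using hs2)
              e3.neg o4 o1 o2.neg, ?_⟩
          · rw [Quaternion.normSq_def']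
            show (-x.imJ)^2 + (x.imK)^2 + (x.re)^2 + (-x.imI)^2 = (p:ℤ)
            linear_combination hNe
          · apply quat_eq_unit_mul <;>
              simp [Quaternion.re_mul, Quaternion.imI_mul, Quaternion.imJ_mul, Quaternion.imK_mul] <;>
              ring
      · refine ⟨qmk 0 0 1 0, by rw [mem_quatUnits_iff]; norm_num,
          qmk x.imJ (-x.imK) (-x.re) x.imI, mem_Pset_three hp h4' _ ?_
            (fun _ => hs) (fun h => absurd h hs.ne') e3 o4.neg o1.neg o2, ?_⟩
        · rw [Quaternion.normSq_def']
          show (x.imJ)^2 + (-x.imK)^2 + (-x.re)^2 + (x.imI)^2 = (p:ℤ)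
          linear_combination hNe
        · apply quat_eq_unit_mul <;>
            simp [Quaternion.re_mul, Quaternion.imI_mul, Quaternion.imJ_mul, Quaternion.imK_mul] <;>
            ring
    · -- imK even: candidates ∓k x : -k*x = (d, c, -b, -a), k*x = (-d, -c, b, a)
      rcases lt_trichotomy x.imK 0 with hs | hs | hs
      · refine ⟨qmk 0 0 0 (-1), by rw [mem_quatUnits_iff]; norm_num,
          qmk (-x.imK) (-x.imJ) x.imI x.re, mem_Pset_three hp h4' _ ?_
            (fun _ => by simpa using hs) (fun h => absurd (by simpa using h) hs.ne)
            e4.neg o3.neg o2 o1, ?_⟩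
        · rw [Quaternion.normSq_def']
          show (-x.imK)^2 + (-x.imJ)^2 + (x.imI)^2 + (x.re)^2 = (p:ℤ)
          linear_combination hNe
        · apply quat_eq_unit_mul <;>
            simp [Quaternion.re_mul, Quaternion.imI_mul, Quaternion.imJ_mul, Quaternion.imK_mul] <;>
            ring
      · rcases lt_trichotomy x.imJ 0 with hs2 | hs2 | hs2
        · -- imK = 0, imJ < 0 : candidates have imI = ±c: pick imI = -c > 0 : k*x = (-d,-c,b,a) : ε = -k
          refine ⟨qmk 0 0 0 (-1), by rw [mem_quatUnits_iff]; norm_num,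
            qmk (-x.imK) (-x.imJ) x.imI x.re, mem_Pset_three hp h4' _ ?_
              (fun h => absurd (by simpa using hs) h) (fun _ => by simpa using hs2)
              e4.neg o3.neg o2 o1, ?_⟩
          · rw [Quaternion.normSq_def']
            show (-x.imK)^2 + (-x.imJ)^2 + (x.imI)^2 + (x.re)^2 = (p:ℤ)
            linear_combination hNe
          · apply quat_eq_unit_mul <;>
              simp [Quaternion.re_mul, Quaternion.imI_mul, Quaternion.imJ_mul, Quaternion.imK_mul] <;>
              ring
        · exfalso; exact (Int.not_odd_iff_even.mpr (by rw [hs2]; exact Even.zero)) o3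
        · refine ⟨qmk 0 0 0 1, by rw [mem_quatUnits_iff]; norm_num,
            qmk x.imK x.imJ (-x.imI) (-x.re), mem_Pset_three hp h4' _ ?_
              (fun h => absurd (by simpa using hs) h) (fun _ => by simpa using hs2)
              e4 o3 o2.neg o1.neg, ?_⟩
          · rw [Quaternion.normSq_def']
            show (x.imK)^2 + (x.imJ)^2 + (-x.imI)^2 + (-x.re)^2 = (p:ℤ)
            linear_combination hNe
          · apply quat_eq_unit_mul <;>
              simp [Quaternion.re_mul, Quaternion.imI_mul, Quaternion.imJ_mul, Quaternion.imK_mul] <;>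
              ring
      · refine ⟨qmk 0 0 0 1, by rw [mem_quatUnits_iff]; norm_num,
          qmk x.imK x.imJ (-x.imI) (-x.re), mem_Pset_three hp h4' _ ?_
            (fun _ => hs) (fun h => absurd h hs.ne') e4 o3 o2.neg o1.neg, ?_⟩
        · rw [Quaternion.normSq_def']
          show (x.imK)^2 + (x.imJ)^2 + (-x.imI)^2 + (-x.re)^2 = (p:ℤ)
          linear_combination hNe
        · apply quat_eq_unit_mul <;>
            simp [Quaternion.re_mul, Quaternion.imI_mul, Quaternion.imJ_mul, Quaternion.imK_mul] <;>
            ring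

end Normalization


section Uniq
variable {p : ℕ}

lemma Pset_unit_cancel (hp : p.Prime) (hodd : Odd p) {π π' τ : ℍ[ℤ]}
    (h1 : π ∈ Pset p) (h2 : π' ∈ Pset p) (hτ : τ ∈ quatUnits) (h : π = τ * π') : π = π' := by
  have hmod : p % 4 = 1 ∨ p % 4 = 3 := by obtain ⟨t, ht⟩ := hodd; omega
  have er := congrArg QuaternionAlgebra.re h
  have ei := congrArg QuaternionAlgebra.imI h
  rw [mem_quatUnits_iff] at hτ
  rcases hτ with ⟨t1,t2,t3,t4⟩ | ⟨t1,t2,t3,t4⟩ | ⟨t1,t2,t3,t4⟩ | ⟨t1,t2,t3,t4⟩ |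
      ⟨t1,t2,t3,t4⟩ | ⟨t1,t2,t3,t4⟩ | ⟨t1,t2,t3,t4⟩ | ⟨t1,t2,t3,t4⟩ <;>
    simp only [Quaternion.re_mul, Quaternion.imI_mul, t1, t2, t3, t4] at er ei <;>
    ring_nf at er ei
  -- case τ = 1
  · rw [h]
    have : τ = 1 := by ext <;> simp [t1,t2,t3,t4]
    rw [this, one_mul]
  -- case τ = -1 : sign contradiction
  · exfalso
    rcases hmod with h4 | h4
    · have s1 := Pset_sign_one h4 h1
      have s2 := Pset_sign_one h4 h2
      omega
    · have h4' : p % 4 ≠ 1 := by omega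
      have s1 := Pset_sign_three h4' h1
      have s2 := Pset_sign_three h4' h2
      rcases eq_or_ne π'.re 0 with hz | hz
      · have b1 := s2.2 hz
        have hz1 : π.re = 0 := by omega
        have b2 := s1.2 hz1
        omega
      · have b2 := s2.1 hz
        have hz1 : π.re ≠ 0 := by omega
        have b1 := s1.1 hz1
        omega
  -- cases τ = ±i, ±j, ±k : parity contradiction on re
  all_goals exfalso
  all_goals rcases hmod with h4 | h4
  all_goals first
    | (have q1 := (Pset_parity_one h4 h1).1
       have q2 := Pset_parity_one h4 h2
       obtain ⟨s, hs⟩ := q1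
       first
         | (obtain ⟨t, ht⟩ := q2.2.1; omega)
         | (obtain ⟨t, ht⟩ := q2.2.2.1; omega)
         | (obtain ⟨t, ht⟩ := q2.2.2.2; omega))
    | (have h4' : p % 4 ≠ 1 := by omega
       have q1 := (Pset_parity_three h4' h1).1
       have q2 := Pset_parity_three h4' h2
       obtain ⟨s, hs⟩ := q1
       first
         | (obtain ⟨t, ht⟩ := q2.2.1; omega)
         | (obtain ⟨t, ht⟩ := q2.2.2.1; omega)
         | (obtain ⟨t, ht⟩ := q2.2.2.2; omega))

lemma Pset_star_not_mem {π : ℍ[ℤ]} (hp : p.Prime) (h1 : π ∈ Pset p)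
    (h2 : star π ∉ Pset p) : star π = -π := by
  have hN := Pset_normSq h1
  have hNs : normSq (star π) = (p:ℤ) := by rw [Quaternion.normSq_star]; exact hN
  by_cases h4 : p % 4 = 1
  · exfalso
    apply h2
    obtain ⟨o1, e2, e3, e4⟩ := Pset_parity_one h4 h1
    refine mem_Pset_one hp h4 _ hNs ?_ ?_ ?_ ?_ ?_
    · rw [Quaternion.re_star]; exact Pset_sign_one h4 h1
    · rw [Quaternion.re_star]; exact o1
    · rw [Quaternion.imI_star]; exact e2.neg
    · rw [Quaternion.imJ_star]; exact e3.neg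
    · rw [Quaternion.imK_star]; exact e4.neg
  · obtain ⟨e1, o2, o3, o4⟩ := Pset_parity_three h4 h1
    obtain ⟨hs1, hs2⟩ := Pset_sign_three h4 h1
    rcases eq_or_ne π.re 0 with hz | hz
    · ext <;> simp [Quaternion.re_star, Quaternion.imI_star, Quaternion.imJ_star,
        Quaternion.imK_star, Quaternion.re_neg, Quaternion.imI_neg, Quaternion.imJ_neg,
        Quaternion.imK_neg, hz]
    · exfalso
      apply h2
      refine mem_Pset_three hp h4 _ hNs ?_ ?_ ?_ ?_ ?_ ?_
      · rw [Quaternion.re_star]; intro _; exact hs1 hz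
      · rw [Quaternion.re_star]; intro hc; exact absurd hc hz
      · rw [Quaternion.re_star]; exact e1
      · rw [Quaternion.imI_star]; exact o2.neg
      · rw [Quaternion.imJ_star]; exact o3.neg
      · rw [Quaternion.imK_star]; exact o4.neg
end Uniq


section Descent

lemma cent (a n : ℤ) (hn : 0 < n) : ∃ c e : ℤ, a = c + n*e ∧ 4*c^2 ≤ n^2 := by
  refine ⟨a - n*((2*a+n)/(2*n)), (2*a+n)/(2*n), by ring, ?_⟩
  have h1 := Int.emod_nonneg (2*a+n) (by positivity : (2*n) ≠ 0)
  have h2 := Int.emod_lt_of_pos (2*a+n) (by positivity : 0 < 2*n)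
  have h3 := Int.mul_ediv_add_emod (2*a+n) (2*n)
  nlinarith [sq_nonneg (2*(a - n*((2*a+n)/(2*n))))]

lemma cast_mul_eq_zero {p : ℕ} [Fact p.Prime] {n : ℕ} (hn : (n : ZMod p) ≠ 0)
    {y : ℍ[ZMod p]} (h : (n:ℍ[ZMod p]) * y = 0) : y = 0 := by
  have e1 := congrArg QuaternionAlgebra.re h
  have e2 := congrArg QuaternionAlgebra.imI h
  have e3 := congrArg QuaternionAlgebra.imJ h
  have e4 := congrArg QuaternionAlgebra.imK h
  simp only [Quaternion.re_mul, Quaternion.imI_mul, Quaternion.imJ_mul, Quaternion.imK_mul,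
    Quaternion.re_natCast, Quaternion.imI_natCast, Quaternion.imJ_natCast,
    Quaternion.imK_natCast, Quaternion.re_zero, Quaternion.imI_zero, Quaternion.imJ_zero,
    Quaternion.imK_zero, zero_mul, mul_zero, add_zero, zero_add, sub_zero, neg_zero] at e1 e2 e3 e4
  ext <;> simp only [Quaternion.re_zero, Quaternion.imI_zero, Quaternion.imJ_zero,
    Quaternion.imK_zero]
  · exact (mul_eq_zero.mp e1).resolve_left hn
  · exact (mul_eq_zero.mp e2).resolve_left hn
  · exact (mul_eq_zero.mp e3).resolve_left hn
  · exact (mul_eq_zero.mp e4).resolve_left hn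

lemma star_mk (c1 c2 c3 c4 : ℤ) : star (qmk c1 c2 c3 c4) = qmk c1 (-c2) (-c3) (-c4) := by
  ext <;> simp [Quaternion.re_star, Quaternion.imI_star, Quaternion.imJ_star, Quaternion.imK_star]

set_option maxHeartbeats 1600000 in
lemma descent {p : ℕ} [Fact p.Prime] (β : ℍ[ℤ]) :
    ∀ s : ℕ, 1 ≤ s → s < p → ∀ δ : ℍ[ℤ], Quaternion.normSq δ = (p:ℤ) * (s:ℤ) →
      redp p (β * star δ) = 0 →
      ∃ δ' : ℍ[ℤ], Quaternion.normSq δ' = (p:ℤ) ∧ redp p (β * star δ') = 0 := by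
  have hp := (Fact.out : p.Prime)
  intro s
  induction s using Nat.strong_induction_on with
  | _ s IH =>
  intro hs1 hsp δ hNδ hdiv
  rcases eq_or_lt_of_le hs1 with h1 | h2
  · exact ⟨δ, by rw [hNδ, ← h1]; norm_num, hdiv⟩
  have hsZ : (0:ℤ) < (s:ℤ) := by exact_mod_cast lt_of_lt_of_le Nat.zero_lt_one hs1
  obtain ⟨c1, e1, hd1, hb1⟩ := cent δ.re s hsZ
  obtain ⟨c2, e2, hd2, hb2⟩ := cent δ.imI s hsZ
  obtain ⟨c3, e3, hd3, hb3⟩ := cent δ.imJ s hsZ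
  obtain ⟨c4, e4, hd4, hb4⟩ := cent δ.imK s hsZ
  have hNδe : δ.re^2 + δ.imI^2 + δ.imJ^2 + δ.imK^2 = (p:ℤ) * (s:ℤ) := by
    rw [← Quaternion.normSq_def', hNδ]
  obtain ⟨T, hT⟩ : ∃ T : ℤ, c1^2+c2^2+c3^2+c4^2 = (s:ℤ) * T :=
    ⟨(p:ℤ) - 2*(c1*e1+c2*e2+c3*e3+c4*e4) - (s:ℤ)*(e1^2+e2^2+e3^2+e4^2), by
      linear_combination hNδe - (δ.re + c1 + (s:ℤ)*e1)*hd1 - (δ.imI + c2 + (s:ℤ)*e2)*hd2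
        - (δ.imJ + c3 + (s:ℤ)*e3)*hd3 - (δ.imK + c4 + (s:ℤ)*e4)*hd4⟩
  have hT0 : 0 ≤ T := by nlinarith [sq_nonneg c1, sq_nonneg c2, sq_nonneg c3, sq_nonneg c4]
  have hTpos : 0 < T := by
    rcases eq_or_lt_of_le hT0 with h0 | h0
    · exfalso
      rw [← h0, mul_zero] at hT
      have hc1 : c1 = 0 := by nlinarith [sq_nonneg c1, sq_nonneg c2, sq_nonneg c3, sq_nonneg c4]
      have hc2 : c2 = 0 := by nlinarith [sq_nonneg c1, sq_nonneg c2, sq_nonneg c3, sq_nonneg c4]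
      have hc3 : c3 = 0 := by nlinarith [sq_nonneg c1, sq_nonneg c2, sq_nonneg c3, sq_nonneg c4]
      have hc4 : c4 = 0 := by nlinarith [sq_nonneg c1, sq_nonneg c2, sq_nonneg c3, sq_nonneg c4]
      rw [hc1] at hd1; rw [hc2] at hd2; rw [hc3] at hd3; rw [hc4] at hd4
      have hps : (p:ℤ) * (s:ℤ) = (s:ℤ) * ((s:ℤ) * (e1^2+e2^2+e3^2+e4^2)) := by
        linear_combination -hNδe + (δ.re + (s:ℤ)*e1)*hd1 + (δ.imI + (s:ℤ)*e2)*hd2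
          + (δ.imJ + (s:ℤ)*e3)*hd3 + (δ.imK + (s:ℤ)*e4)*hd4
      have hpd : (p:ℤ) = (s:ℤ) * (e1^2+e2^2+e3^2+e4^2) := by
        apply mul_right_cancel₀ hsZ.ne'
        linear_combination hps
      have hdvd : s ∣ p := by
        have h5 : (s:ℤ) ∣ (p:ℤ) := ⟨_, hpd⟩
        exact_mod_cast h5
      rcases (Nat.Prime.eq_one_or_self_of_dvd hp _ hdvd) with h | h <;> omega
    · exact h0
  have hTs : T < (s:ℤ) := by
    by_contra hTs
    push_neg at hTs
    have hTeq : T = (s:ℤ) := by nlinarith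
    rw [hTeq] at hT
    have q1 : 4*c1^2 = (s:ℤ)^2 := by nlinarith
    have q2 : 4*c2^2 = (s:ℤ)^2 := by nlinarith
    have q3 : 4*c3^2 = (s:ℤ)^2 := by nlinarith
    have q4 : 4*c4^2 = (s:ℤ)^2 := by nlinarith
    have w1 : (2*c1 - s)*(2*c1 + s) = 0 := by linear_combination q1
    have w2 : (2*c2 - s)*(2*c2 + s) = 0 := by linear_combination q2
    have w3 : (2*c3 - s)*(2*c3 + s) = 0 := by linear_combination q3
    have w4 : (2*c4 - s)*(2*c4 + s) = 0 := by linear_combination q4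
    have g1 : ∃ σ : ℤ, σ^2 = 1 ∧ 2*c1 = σ*(s:ℤ) := by
      rcases mul_eq_zero.mp w1 with h | h
      exacts [⟨1, by norm_num, by linarith⟩, ⟨-1, by norm_num, by linarith⟩]
    have g2 : ∃ σ : ℤ, σ^2 = 1 ∧ 2*c2 = σ*(s:ℤ) := by
      rcases mul_eq_zero.mp w2 with h | h
      exacts [⟨1, by norm_num, by linarith⟩, ⟨-1, by norm_num, by linarith⟩]
    have g3 : ∃ σ : ℤ, σ^2 = 1 ∧ 2*c3 = σ*(s:ℤ) := by
      rcases mul_eq_zero.mp w3 with h | h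
      exacts [⟨1, by norm_num, by linarith⟩, ⟨-1, by norm_num, by linarith⟩]
    have g4 : ∃ σ : ℤ, σ^2 = 1 ∧ 2*c4 = σ*(s:ℤ) := by
      rcases mul_eq_zero.mp w4 with h | h
      exacts [⟨1, by norm_num, by linarith⟩, ⟨-1, by norm_num, by linarith⟩]
    obtain ⟨σ1, hσs1, hσ1⟩ := g1
    obtain ⟨σ2, hσs2, hσ2⟩ := g2
    obtain ⟨σ3, hσs3, hσ3⟩ := g3
    obtain ⟨σ4, hσs4, hσ4⟩ := g4
    have big : 4*((p:ℤ)*(s:ℤ)) =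
        (s:ℤ)^2*((σ1+2*e1)^2 + (σ2+2*e2)^2 + (σ3+2*e3)^2 + (σ4+2*e4)^2) := by
      linear_combination -4*hNδe + (2*δ.re + σ1*(s:ℤ) + 2*(s:ℤ)*e1)*(2*hd1)
        + (2*δ.imI + σ2*(s:ℤ) + 2*(s:ℤ)*e2)*(2*hd2)
        + (2*δ.imJ + σ3*(s:ℤ) + 2*(s:ℤ)*e3)*(2*hd3)
        + (2*δ.imK + σ4*(s:ℤ) + 2*(s:ℤ)*e4)*(2*hd4)
        + (2*δ.re + σ1*(s:ℤ) + 2*(s:ℤ)*e1)*hσ1 + (2*δ.imI + σ2*(s:ℤ) + 2*(s:ℤ)*e2)*hσ2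
        + (2*δ.imJ + σ3*(s:ℤ) + 2*(s:ℤ)*e3)*hσ3 + (2*δ.imK + σ4*(s:ℤ) + 2*(s:ℤ)*e4)*hσ4
    have hps4 : 4*((p:ℤ)*(s:ℤ)) =
        4*((s:ℤ)*((s:ℤ)*(1 + (σ1*e1+σ2*e2+σ3*e3+σ4*e4) + (e1^2+e2^2+e3^2+e4^2)))) := by
      linear_combination big + (s:ℤ)^2*hσs1 + (s:ℤ)^2*hσs2 + (s:ℤ)^2*hσs3 + (s:ℤ)^2*hσs4
    have hpd : (p:ℤ) = (s:ℤ)*(1 + (σ1*e1+σ2*e2+σ3*e3+σ4*e4) + (e1^2+e2^2+e3^2+e4^2)) := by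
      apply mul_right_cancel₀ hsZ.ne'
      linarith
    have hdvd : s ∣ p := by
      have h5 : (s:ℤ) ∣ (p:ℤ) := ⟨_, hpd⟩
      exact_mod_cast h5
    rcases (Nat.Prime.eq_one_or_self_of_dvd hp _ hdvd) with h | h <;> omega
  -- the actual descent step
  set δ' : ℍ[ℤ] := qmk (T + (c1*e1+c2*e2+c3*e3+c4*e4))
    (c1*e2 - c2*e1 - c3*e4 + c4*e3)
    (c1*e3 + c2*e4 - c3*e1 - c4*e2)
    (c1*e4 - c2*e3 + c3*e2 - c4*e1) with hδ'def
  set c : ℍ[ℤ] := qmk c1 c2 c3 c4 with hcdef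
  have hkey : star c * δ = ((s:ℕ):ℍ[ℤ]) * δ' := by
    rw [hcdef, star_mk, hδ'def]
    ext <;>
      simp only [Quaternion.re_mul, Quaternion.imI_mul, Quaternion.imJ_mul, Quaternion.imK_mul,
        Quaternion.re_natCast, Quaternion.imI_natCast, Quaternion.imJ_natCast,
        Quaternion.imK_natCast]
    · show c1*δ.re - -c2*δ.imI - -c3*δ.imJ - -c4*δ.imK
        = (s:ℤ)*(T + (c1*e1+c2*e2+c3*e3+c4*e4)) - 0*(c1*e2 - c2*e1 - c3*e4 + c4*e3)
          - 0*(c1*e3 + c2*e4 - c3*e1 - c4*e2) - 0*(c1*e4 - c2*e3 + c3*e2 - c4*e1)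
      linear_combination c1*hd1 + c2*hd2 + c3*hd3 + c4*hd4 + hT
    · show c1*δ.imI + -c2*δ.re + -c3*δ.imK - -c4*δ.imJ
        = (s:ℤ)*(c1*e2 - c2*e1 - c3*e4 + c4*e3) + 0*(T + (c1*e1+c2*e2+c3*e3+c4*e4))
          + 0*(c1*e4 - c2*e3 + c3*e2 - c4*e1) - 0*(c1*e3 + c2*e4 - c3*e1 - c4*e2)
      linear_combination c1*hd2 - c2*hd1 - c3*hd4 + c4*hd3
    · show c1*δ.imJ - -c2*δ.imK + -c3*δ.re + -c4*δ.imI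
        = (s:ℤ)*(c1*e3 + c2*e4 - c3*e1 - c4*e2) - 0*(c1*e4 - c2*e3 + c3*e2 - c4*e1)
          + 0*(T + (c1*e1+c2*e2+c3*e3+c4*e4)) + 0*(c1*e2 - c2*e1 - c3*e4 + c4*e3)
      linear_combination c1*hd3 + c2*hd4 - c3*hd1 - c4*hd2
    · show c1*δ.imK + -c2*δ.imJ - -c3*δ.imI + -c4*δ.re
        = (s:ℤ)*(c1*e4 - c2*e3 + c3*e2 - c4*e1) + 0*(c1*e3 + c2*e4 - c3*e1 - c4*e2)
          - 0*(c1*e2 - c2*e1 - c3*e4 + c4*e3) + 0*(T + (c1*e1+c2*e2+c3*e3+c4*e4))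
      linear_combination c1*hd4 - c2*hd3 + c3*hd2 - c4*hd1
  have hNc : Quaternion.normSq c = (s:ℤ) * T := by
    rw [Quaternion.normSq_def', hcdef]
    show c1^2+c2^2+c3^2+c4^2 = (s:ℤ)*T
    exact hT
  have hNs : Quaternion.normSq ((s:ℕ):ℍ[ℤ]) = ((s:ℤ))^2 := by
    have hcast : ((s:ℕ):ℍ[ℤ]) = (((s:ℕ):ℤ):ℍ[ℤ]) := by norm_cast
    rw [hcast, Quaternion.normSq_def']
    simp [sq]
  have hNδ' : Quaternion.normSq δ' = (p:ℤ) * T := by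
    have h1 : Quaternion.normSq (star c * δ) = ((s:ℤ)*T) * ((p:ℤ)*(s:ℤ)) := by
      rw [map_mul, Quaternion.normSq_star, hNc, hNδ]
    rw [hkey, map_mul, hNs] at h1
    have h2 : (s:ℤ)^2 * Quaternion.normSq δ' = (s:ℤ)^2 * ((p:ℤ)*T) := by
      rw [h1]; ring
    exact mul_left_cancel₀ (pow_ne_zero 2 hsZ.ne') h2
  have hstar : star δ * c = ((s:ℕ):ℍ[ℤ]) * star δ' := by
    have h1 := congrArg star hkey
    rw [star_mul, star_star, star_mul, star_natCast] at h1
    rw [h1, ← (Nat.cast_commute (s:ℕ) (star δ')).eq]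
  have h2 : ((s:ℕ):ℍ[ℤ]) * (β * star δ') = (β * star δ) * c := by
    calc ((s:ℕ):ℍ[ℤ]) * (β * star δ') = (((s:ℕ):ℍ[ℤ]) * β) * star δ' := by rw [mul_assoc]
      _ = (β * ((s:ℕ):ℍ[ℤ])) * star δ' := by rw [(Nat.cast_commute (s:ℕ) β).eq]
      _ = β * (((s:ℕ):ℍ[ℤ]) * star δ') := by rw [mul_assoc]
      _ = β * (star δ * c) := by rw [← hstar]
      _ = (β * star δ) * c := by rw [mul_assoc]
  have hdiv' : redp p (β * star δ') = 0 := by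
    have h3 : ((s:ℕ):ℍ[ZMod p]) * redp p (β * star δ') = 0 := by
      have h4 : redp p ((s:ℕ):ℍ[ℤ]) * redp p (β * star δ')
          = redp p (β * star δ) * redp p c := by
        rw [← map_mul, ← map_mul, h2]
      rw [hdiv, zero_mul, map_natCast] at h4
      exact h4
    have hsne : ((s:ℕ) : ZMod p) ≠ 0 := by
      rw [Ne, ZMod.natCast_eq_zero_iff]
      intro hd
      have := Nat.le_of_dvd (by omega) hd
      omega
    exact cast_mul_eq_zero hsne h3
  refine IH T.toNat (by omega) (by omega) (by omega) δ' ?_ hdiv'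
  rw [hNδ', Int.toNat_of_nonneg hT0]

end Descent


section Extract
variable {p : ℕ} [Fact p.Prime]

lemma redp_p_zero : redp p ((p:ℕ):ℍ[ℤ]) = 0 := by
  ext <;> simp [Quaternion.re_natCast, Quaternion.imI_natCast, Quaternion.imJ_natCast,
    Quaternion.imK_natCast, ZMod.natCast_self]

lemma content_one_redp_ne (hp : p.Prime) {x : ℍ[ℤ]} (hc : content x = 1) :
    redp p x ≠ 0 := by
  haveI : NeZero p := ⟨hp.ne_zero⟩
  intro h0
  rw [redp_eq_zero_iff] at h0
  have := (dvd_content_iff p x).mpr h0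
  rw [hc] at this
  have := Nat.le_of_dvd (by norm_num) this
  have := hp.two_le
  omega

set_option maxHeartbeats 2000000 in
lemma extract_factor (hp : p.Prime) (hodd : Odd p) (β : ℍ[ℤ]) (m : ℕ) (hm : 1 ≤ m)
    (hNβ : Quaternion.normSq β = (p:ℤ)^m) (hprim : content β = 1) :
    ∃ η δ : ℍ[ℤ], Quaternion.normSq δ = (p:ℤ) ∧ β = η * δ := by
  haveI : NeZero p := ⟨hp.ne_zero⟩
  obtain ⟨k, rfl⟩ : ∃ k, m = k + 1 := ⟨m-1, by omega⟩
  have hpZ : (0:ℤ) < (p:ℤ) := by exact_mod_cast hp.pos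
  obtain ⟨c1, e1, hd1, hb1⟩ := cent β.re p hpZ
  obtain ⟨c2, e2, hd2, hb2⟩ := cent β.imI p hpZ
  obtain ⟨c3, e3, hd3, hb3⟩ := cent β.imJ p hpZ
  obtain ⟨c4, e4, hd4, hb4⟩ := cent β.imK p hpZ
  have hNβe : β.re^2 + β.imI^2 + β.imJ^2 + β.imK^2 = (p:ℤ)^(k+1) := by
    rw [← Quaternion.normSq_def', hNβ]
  obtain ⟨S, hS⟩ : ∃ S : ℤ, c1^2+c2^2+c3^2+c4^2 = (p:ℤ) * S :=
    ⟨(p:ℤ)^k - 2*(c1*e1+c2*e2+c3*e3+c4*e4) - (p:ℤ)*(e1^2+e2^2+e3^2+e4^2), by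
      linear_combination hNβe - (β.re + c1 + (p:ℤ)*e1)*hd1 - (β.imI + c2 + (p:ℤ)*e2)*hd2
        - (β.imJ + c3 + (p:ℤ)*e3)*hd3 - (β.imK + c4 + (p:ℤ)*e4)*hd4⟩
  have hS0 : 0 ≤ S := by nlinarith [sq_nonneg c1, sq_nonneg c2, sq_nonneg c3, sq_nonneg c4]
  have hSpos : 0 < S := by
    rcases eq_or_lt_of_le hS0 with h0 | h0
    · exfalso
      rw [← h0, mul_zero] at hS
      have hc1 : c1 = 0 := by nlinarith [sq_nonneg c1, sq_nonneg c2, sq_nonneg c3, sq_nonneg c4]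
      have hc2 : c2 = 0 := by nlinarith [sq_nonneg c1, sq_nonneg c2, sq_nonneg c3, sq_nonneg c4]
      have hc3 : c3 = 0 := by nlinarith [sq_nonneg c1, sq_nonneg c2, sq_nonneg c3, sq_nonneg c4]
      have hc4 : c4 = 0 := by nlinarith [sq_nonneg c1, sq_nonneg c2, sq_nonneg c3, sq_nonneg c4]
      apply content_one_redp_ne hp hprim
      rw [redp_eq_zero_iff]
      exact ⟨⟨e1, by omega⟩, ⟨e2, by omega⟩, ⟨e3, by omega⟩, ⟨e4, by omega⟩⟩
    · exact h0
  have hSp : S < (p:ℤ) := by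
    by_contra hSp
    push_neg at hSp
    have hSeq : S = (p:ℤ) := by nlinarith
    rw [hSeq] at hS
    have q1 : 4*c1^2 = (p:ℤ)^2 := by nlinarith
    have w1 : (2*c1 - p)*(2*c1 + p) = 0 := by linear_combination q1
    obtain ⟨t, ht⟩ := hodd
    rcases mul_eq_zero.mp w1 with h | h <;> omega
  -- p divides β * star c
  set c : ℍ[ℤ] := qmk c1 c2 c3 c4 with hcdef
  set γ0 : ℍ[ℤ] := qmk (S + (e1*c1+e2*c2+e3*c3+e4*c4))
    (-e1*c2 + e2*c1 - e3*c4 + e4*c3)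
    (-e1*c3 + e2*c4 + e3*c1 - e4*c2)
    (-e1*c4 - e2*c3 + e3*c2 + e4*c1) with hγ0def
  have hfact : β * star c = ((p:ℕ):ℍ[ℤ]) * γ0 := by
    rw [hcdef, star_mk, hγ0def]
    ext <;>
      simp only [Quaternion.re_mul, Quaternion.imI_mul, Quaternion.imJ_mul, Quaternion.imK_mul,
        Quaternion.re_natCast, Quaternion.imI_natCast, Quaternion.imJ_natCast,
        Quaternion.imK_natCast]
    · show β.re*c1 - β.imI*(-c2) - β.imJ*(-c3) - β.imK*(-c4)
        = (p:ℤ)*(S + (e1*c1+e2*c2+e3*c3+e4*c4)) - 0*(-e1*c2 + e2*c1 - e3*c4 + e4*c3)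
          - 0*(-e1*c3 + e2*c4 + e3*c1 - e4*c2) - 0*(-e1*c4 - e2*c3 + e3*c2 + e4*c1)
      linear_combination c1*hd1 + c2*hd2 + c3*hd3 + c4*hd4 + hS
    · show β.re*(-c2) + β.imI*c1 + β.imJ*(-c4) - β.imK*(-c3)
        = (p:ℤ)*(-e1*c2 + e2*c1 - e3*c4 + e4*c3) + 0*(S + (e1*c1+e2*c2+e3*c3+e4*c4))
          + 0*(-e1*c4 - e2*c3 + e3*c2 + e4*c1) - 0*(-e1*c3 + e2*c4 + e3*c1 - e4*c2)
      linear_combination -c2*hd1 + c1*hd2 - c4*hd3 + c3*hd4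
    · show β.re*(-c3) - β.imI*(-c4) + β.imJ*c1 + β.imK*(-c2)
        = (p:ℤ)*(-e1*c3 + e2*c4 + e3*c1 - e4*c2) - 0*(-e1*c4 - e2*c3 + e3*c2 + e4*c1)
          + 0*(S + (e1*c1+e2*c2+e3*c3+e4*c4)) + 0*(-e1*c2 + e2*c1 - e3*c4 + e4*c3)
      linear_combination -c3*hd1 + c4*hd2 + c1*hd3 - c2*hd4
    · show β.re*(-c4) + β.imI*(-c3) - β.imJ*(-c2) + β.imK*c1
        = (p:ℤ)*(-e1*c4 - e2*c3 + e3*c2 + e4*c1) + 0*(-e1*c3 + e2*c4 + e3*c1 - e4*c2)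
          - 0*(-e1*c2 + e2*c1 - e3*c4 + e4*c3) + 0*(S + (e1*c1+e2*c2+e3*c3+e4*c4))
      linear_combination -c4*hd1 - c3*hd2 + c2*hd3 + c1*hd4
  have hdiv0 : redp p (β * star c) = 0 := by
    rw [hfact, map_mul, redp_p_zero, zero_mul]
  have hNc : Quaternion.normSq c = (p:ℤ) * (S.toNat : ℤ) := by
    rw [Quaternion.normSq_def', hcdef]
    show c1^2+c2^2+c3^2+c4^2 = (p:ℤ)*(S.toNat:ℤ)
    rw [Int.toNat_of_nonneg hS0]
    exact hS
  obtain ⟨δ, hNδ, hdivδ⟩ := descent β S.toNat (by omega) (by omega) c hNc hdiv0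
  haveI : NeZero p := ⟨hp.ne_zero⟩
  obtain ⟨η, hη⟩ := (redp_eq_zero_iff' p _).mp hdivδ
  refine ⟨η, δ, hNδ, ?_⟩
  have h5 : β * (star δ * δ) = ((p:ℕ):ℍ[ℤ]) * (η * δ) := by
    rw [← mul_assoc, hη, mul_assoc]
  have hsdd : star δ * δ = ((p:ℕ):ℍ[ℤ]) := by
    rw [Quaternion.star_mul_self, hNδ]
    norm_cast
  rw [hsdd] at h5
  have h6 : ((p:ℕ):ℍ[ℤ]) * β = ((p:ℕ):ℍ[ℤ]) * (η * δ) := by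
    rw [(Nat.cast_commute (p:ℕ) β).eq]
    exact h5
  exact natCast_mul_cancel hp.ne_zero h6

lemma normSq_unit_list_prod (hp : p.Prime) (ε : ℍ[ℤ]) (hε : ε ∈ quatUnits) (L : List ℍ[ℤ])
    (hL : ∀ π ∈ L, π ∈ Pset p) : Quaternion.normSq (ε * L.prod) = (p:ℤ)^L.length := by
  rw [map_mul, (normSq_one_iff_quatUnits ε).mpr hε, one_mul]
  induction L with
  | nil => simp
  | cons a L IH =>
    rw [List.prod_cons, map_mul, Pset_normSq (hL a (by simp)), List.length_cons]
    rw [IH (fun π hπ => hL π (by simp [hπ]))]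
    ring

lemma extract_pset (hp : p.Prime) (hodd : Odd p) (β : ℍ[ℤ]) (k : ℕ)
    (hNβ : Quaternion.normSq β = (p:ℤ)^(k+1)) (hprim : content β = 1) :
    ∃ γ π : ℍ[ℤ], π ∈ Pset p ∧ β = γ * π ∧ Quaternion.normSq γ = (p:ℤ)^k ∧ content γ = 1 := by
  haveI : NeZero p := ⟨hp.ne_zero⟩
  obtain ⟨η, δ, hNδ, hβ⟩ := extract_factor hp hodd β (k+1) (by omega) hNβ hprim
  obtain ⟨ε, hε, π, hπ, hδ⟩ := exists_unit_factor hp hodd δ hNδ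
  have hβ2 : β = (η * ε) * π := by rw [hβ, hδ, mul_assoc]
  have hNγ : Quaternion.normSq (η * ε) = (p:ℤ)^k := by
    have h1 : Quaternion.normSq β = Quaternion.normSq (η * ε) * (p:ℤ) := by
      rw [hβ2, map_mul, Pset_normSq hπ]
    rw [hNβ, pow_succ] at h1
    have hpne : (p:ℤ) ≠ 0 := by exact_mod_cast hp.ne_zero
    exact (mul_right_cancel₀ hpne h1.symm)
  refine ⟨η * ε, π, hπ, hβ2, hNγ, ?_⟩
  apply content_eq_one_of_pow p hp k _ hNγ
  intro h0
  apply content_one_redp_ne hp hprim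
  rw [hβ2, map_mul, h0, zero_mul]
end Extract


section Main
variable {p : ℕ} [Fact p.Prime]

def crel (p : ℕ) : ℍ[ℤ] → ℍ[ℤ] → Prop :=
  fun a b => (star b ∈ Pset p → a ≠ star b) ∧ (star b ∉ Pset p → a ≠ b)

lemma normSq_natCast_sq (n : ℕ) : Quaternion.normSq ((n:ℕ):ℍ[ℤ]) = ((n:ℤ))^2 := by
  have hcast : ((n:ℕ):ℍ[ℤ]) = (((n:ℕ):ℤ):ℍ[ℤ]) := by norm_cast
  rw [hcast, Quaternion.normSq_def']
  simp [sq]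

lemma list_concat_cases (L : List ℍ[ℤ]) : L = [] ∨ ∃ K a, L = K ++ [a] := by
  rcases List.eq_nil_or_concat L with h | ⟨K, a, h⟩
  · exact Or.inl h
  · exact Or.inr ⟨K, a, by rw [h, List.concat_eq_append]⟩

lemma pset_mul_star (π : ℍ[ℤ]) (hπ : π ∈ Pset p) : π * star π = ((p:ℕ):ℍ[ℤ]) := by
  rw [Quaternion.self_mul_star, Pset_normSq hπ]
  norm_cast

lemma pset_star_mul (π : ℍ[ℤ]) (hπ : π ∈ Pset p) : star π * π = ((p:ℕ):ℍ[ℤ]) := by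
  rw [Quaternion.star_mul_self, Pset_normSq hπ]
  norm_cast

lemma unit_factor_of_p_dvd (hp : p.Prime) (hodd : Odd p) {π π' : ℍ[ℤ]}
    (h1 : π ∈ Pset p) (h2 : π' ∈ Pset p) (h0 : redp p (π * star π') = 0) : π = π' := by
  haveI : NeZero p := ⟨hp.ne_zero⟩
  obtain ⟨τ, hτeq⟩ := (redp_eq_zero_iff' p _).mp h0
  have hNτ : Quaternion.normSq τ = 1 := by
    have e : ((p:ℤ))^2 * Quaternion.normSq τ = (p:ℤ) * (p:ℤ) := by
      calc ((p:ℤ))^2 * Quaternion.normSq τ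
          = Quaternion.normSq ((p:ℕ):ℍ[ℤ]) * Quaternion.normSq τ := by rw [normSq_natCast_sq]
        _ = Quaternion.normSq (((p:ℕ):ℍ[ℤ]) * τ) := (map_mul Quaternion.normSq _ _).symm
        _ = Quaternion.normSq (π * star π') := by rw [hτeq]
        _ = Quaternion.normSq π * Quaternion.normSq (star π') := map_mul Quaternion.normSq _ _
        _ = (p:ℤ) * (p:ℤ) := by rw [Quaternion.normSq_star, Pset_normSq h1, Pset_normSq h2]
    have hp2 : ((p:ℤ))^2 ≠ 0 := pow_ne_zero 2 (by exact_mod_cast hp.ne_zero)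
    apply mul_left_cancel₀ hp2
    rw [e]; ring
  have hτu : τ ∈ quatUnits := (normSq_one_iff_quatUnits τ).mp hNτ
  have h5 : π * ((p:ℕ):ℍ[ℤ]) = ((p:ℕ):ℍ[ℤ]) * (τ * π') := by
    calc π * ((p:ℕ):ℍ[ℤ]) = π * (star π' * π') := by rw [pset_star_mul π' h2]
      _ = (π * star π') * π' := by rw [mul_assoc]
      _ = (((p:ℕ):ℍ[ℤ]) * τ) * π' := by rw [hτeq]
      _ = ((p:ℕ):ℍ[ℤ]) * (τ * π') := by rw [mul_assoc]
  have h6 : ((p:ℕ):ℍ[ℤ]) * π = ((p:ℕ):ℍ[ℤ]) * (τ * π') := by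
    rw [(Nat.cast_commute (p:ℕ) π).eq]; exact h5
  exact Pset_unit_cancel hp hodd h1 h2 hτu (natCast_mul_cancel hp.ne_zero h6)

lemma no_backtrack (hp : p.Prime) (hodd : Odd p) {π' π : ℍ[ℤ]}
    (h1 : π' ∈ Pset p) (h2 : π ∈ Pset p) (hrel : crel p π' π)
    (h0 : redp p (π' * π) = 0) : False := by
  haveI : NeZero p := ⟨hp.ne_zero⟩
  by_cases hsp : star π ∈ Pset p
  · apply hrel.1 hsp
    apply unit_factor_of_p_dvd hp hodd h1 hsp
    rwa [star_star]
  · apply hrel.2 hsp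
    apply unit_factor_of_p_dvd hp hodd h1 h2
    have hneg := Pset_star_not_mem hp h2 hsp
    have : star π = -π := hneg
    calc redp p (π' * star π) = redp p (-(π' * π)) := by rw [this, mul_neg]
      _ = - redp p (π' * π) := by rw [map_neg]
      _ = 0 := by rw [h0, neg_zero]

lemma unit_content (ε : ℍ[ℤ]) (hε : ε ∈ quatUnits) : content ε = 1 := by
  rcases mem_quatUnits_iff ε |>.mp hε with ⟨t1,t2,t3,t4⟩|⟨t1,t2,t3,t4⟩|⟨t1,t2,t3,t4⟩|
    ⟨t1,t2,t3,t4⟩|⟨t1,t2,t3,t4⟩|⟨t1,t2,t3,t4⟩|⟨t1,t2,t3,t4⟩|⟨t1,t2,t3,t4⟩ <;>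
    unfold content <;> rw [t1,t2,t3,t4] <;> decide

lemma chain_redp_ne (hp : p.Prime) (hodd : Odd p) (L : List ℍ[ℤ]) :
    (∀ π ∈ L, π ∈ Pset p) → List.Chain' (crel p) L →
    ∀ ε ∈ quatUnits, redp p (ε * L.prod) ≠ 0 := by
  induction L using List.reverseRecOn with
  | nil =>
    intro _ _ ε hε h0
    rw [List.prod_nil, mul_one] at h0
    exact content_one_redp_ne hp (unit_content ε hε) h0
  | append_singleton L π IH =>
    intro hmem hchain ε hε h0
    have hLmem : ∀ π' ∈ L, π' ∈ Pset p := fun π' h => hmem π' (by simp [h])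
    have hπP : π ∈ Pset p := hmem π (by simp)
    have hchainL : List.Chain' (crel p) L := (List.isChain_append.mp hchain).1
    have hγn : redp p (ε * L.prod) ≠ 0 := IH hLmem hchainL ε hε
    rw [List.prod_append, List.prod_cons, List.prod_nil, mul_one, ← mul_assoc] at h0
    rcases list_concat_cases L with rfl | ⟨K, π', rfl⟩
    · rw [List.prod_nil, mul_one] at h0
      have h1 : star ε * (ε * π) = π := by
        rw [← mul_assoc, (quatUnits_star_mul ε hε).2, one_mul]
      have hδ : redp p π = 0 := by
        rw [← h1, map_mul, h0, mul_zero]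
      exact content_one_redp_ne hp (Pset_prim hπP) hδ
    · have hπ'P : π' ∈ Pset p := hLmem π' (by simp)
      obtain ⟨u, v, huv⟩ := ZMod.sq_add_sq p (-1 : ZMod p)
      have hay : redp p (ε * (K ++ [π']).prod) = redp p (ε * K.prod) * redp p π' := by
        rw [← map_mul, List.prod_append, List.prod_cons, List.prod_nil, mul_one, mul_assoc]
      have hy : Quaternion.normSq (redp p π') = 0 := by
        rw [normSq_redp, Pset_normSq hπ'P]
        simp
      have hax : redp p (ε * (K ++ [π']).prod) * redp p π = 0 := by
        rw [← map_mul]; exact h0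
      have hker := quat_ker huv hodd _ _ _ _ hγn hay hy hax
      rw [← map_mul] at hker
      have hrel : crel p π' π := by
        have := (List.isChain_append.mp hchain).2.2
        exact this π' (by simp [List.getLast?_concat]) π (by simp)
      exact no_backtrack hp hodd hπ'P hπP hrel hker

lemma exists_fac (hp : p.Prime) (hodd : Odd p) :
    ∀ (m : ℕ) (β : ℍ[ℤ]), content β = 1 → Quaternion.normSq β = (p:ℤ)^m →
    ∃ ε L, ε ∈ quatUnits ∧ L.length = m ∧ (∀ π ∈ L, π ∈ Pset p) ∧
      List.Chain' (crel p) L ∧ β = ε * L.prod := by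
  intro m
  induction m with
  | zero =>
    intro β _ hN
    exact ⟨β, [], (normSq_one_iff_quatUnits β).mp (by simpa using hN), rfl,
      by simp, List.isChain_nil, by simp⟩
  | succ k IH =>
    intro β hc hN
    obtain ⟨γ, π, hπ, hβ, hNγ, hcγ⟩ := extract_pset hp hodd β k hN hc
    obtain ⟨ε, L, hε, hlen, hLP, hchain, hγ⟩ := IH γ hcγ hNγ
    refine ⟨ε, L ++ [π], hε, by simp [hlen], ?_, ?_, ?_⟩
    · intro x hx
      rcases List.mem_append.mp hx with h | h
      · exact hLP x h
      · rw [List.mem_singleton.mp h]; exact hπ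
    · rw [show List.Chain' (crel p) (L ++ [π]) ↔ List.IsChain (crel p) (L ++ [π]) from Iff.rfl,
        List.isChain_append]
      refine ⟨hchain, List.isChain_singleton π, ?_⟩
      intro x hx y hy
      have hyπ : π = y := by simpa using hy
      subst hyπ
      rcases list_concat_cases L with rfl | ⟨K, a, rfl⟩
      · simp at hx
      · have hxa : a = x := by simpa [List.getLast?_concat] using hx
        subst hxa
        constructor
        · intro hsp heq
          apply content_one_redp_ne hp hc
          have hββ : β = (ε * K.prod) * ((p:ℕ):ℍ[ℤ]) := by
            rw [hβ, hγ, heq, List.prod_append, List.prod_cons, List.prod_nil, mul_one,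
              ← mul_assoc, mul_assoc, pset_star_mul π hπ]
          rw [hββ, map_mul, redp_p_zero, mul_zero]
        · intro hsp heq
          apply content_one_redp_ne hp hc
          have hs := Pset_star_not_mem hp hπ hsp
          have hpp : π * π = -((p:ℕ):ℍ[ℤ]) := by
            have hps : π * star π = ((p:ℕ):ℍ[ℤ]) := pset_mul_star π hπ
            calc π * π = π * (-(star π)) := by rw [hs, neg_neg]
              _ = -(π * star π) := by rw [mul_neg]
              _ = -((p:ℕ):ℍ[ℤ]) := by rw [hps]
          have hββ : β = -((ε * K.prod) * ((p:ℕ):ℍ[ℤ])) := by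
            rw [hβ, hγ, heq, List.prod_append, List.prod_cons, List.prod_nil, mul_one,
              ← mul_assoc, mul_assoc, hpp, mul_neg]
          rw [hββ, map_neg, map_mul, redp_p_zero, mul_zero, neg_zero]
    · rw [hβ, hγ, List.prod_append, List.prod_cons, List.prod_nil, mul_one, mul_assoc]

lemma unique_fac (hp : p.Prime) (hodd : Odd p) :
    ∀ (m : ℕ) (β : ℍ[ℤ]), content β = 1 →
    ∀ ε L ε' L', (ε ∈ quatUnits ∧ L.length = m ∧ (∀ π ∈ L, π ∈ Pset p) ∧
        List.Chain' (crel p) L ∧ β = ε * L.prod) →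
      (ε' ∈ quatUnits ∧ L'.length = m ∧ (∀ π ∈ L', π ∈ Pset p) ∧
        List.Chain' (crel p) L' ∧ β = ε' * L'.prod) → ε = ε' ∧ L = L' := by
  haveI : NeZero p := ⟨hp.ne_zero⟩
  intro m
  induction m with
  | zero =>
    rintro β hc ε L ε' L' ⟨hε, hlen, _, _, hβ⟩ ⟨hε', hlen', _, _, hβ'⟩
    have hL : L = [] := List.length_eq_zero_iff.mp hlen
    have hL' : L' = [] := List.length_eq_zero_iff.mp hlen'
    subst hL; subst hL'
    rw [List.prod_nil, mul_one] at hβ hβ'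
    exact ⟨hβ ▸ hβ', rfl⟩
  | succ k IH =>
    rintro β hc ε L ε' L' ⟨hε, hlen, hLP, hchain, hβ⟩ ⟨hε', hlen', hLP', hchain', hβ'⟩
    rcases list_concat_cases L with rfl | ⟨K, π, rfl⟩
    · simp at hlen
    rcases list_concat_cases L' with rfl | ⟨K', π', rfl⟩
    · simp at hlen'
    have hπP : π ∈ Pset p := hLP π (by simp)
    have hπ'P : π' ∈ Pset p := hLP' π' (by simp)
    have hKP : ∀ x ∈ K, x ∈ Pset p := fun x h => hLP x (by simp [h])
    have hK'P : ∀ x ∈ K', x ∈ Pset p := fun x h => hLP' x (by simp [h])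
    have hchK : List.Chain' (crel p) K := (List.isChain_append.mp hchain).1
    have hchK' : List.Chain' (crel p) K' := (List.isChain_append.mp hchain').1
    have hβ1 : β = (ε * K.prod) * π := by
      rw [hβ, List.prod_append, List.prod_cons, List.prod_nil, mul_one, mul_assoc]
    have hβ2 : β = (ε' * K'.prod) * π' := by
      rw [hβ', List.prod_append, List.prod_cons, List.prod_nil, mul_one, mul_assoc]
    have hγn : redp p (ε * K.prod) ≠ 0 := chain_redp_ne hp hodd K hKP hchK ε hε
    have hβn : redp p β ≠ 0 := content_one_redp_ne hp hc
    obtain ⟨u, v, huv⟩ := ZMod.sq_add_sq p (-1 : ZMod p)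
    have hay : redp p β = redp p (ε * K.prod) * redp p π := by rw [← map_mul, ← hβ1]
    have hy : Quaternion.normSq (redp p π) = 0 := by
      rw [normSq_redp, Pset_normSq hπP]; simp
    have hax : redp p β * redp p (star π') = 0 := by
      rw [← map_mul]
      have : β * star π' = (ε' * K'.prod) * ((p:ℕ):ℍ[ℤ]) := by
        rw [hβ2, mul_assoc, pset_mul_star π' hπ'P]
      rw [this, map_mul, redp_p_zero, mul_zero]
    have hker := quat_ker huv hodd _ _ _ _ hβn hay hy hax
    rw [← map_mul] at hker
    have hππ' : π = π' := unit_factor_of_p_dvd hp hodd hπP hπ'P hker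
    subst hππ'
    have hγγ : ε * K.prod = ε' * K'.prod := by
      have hsub : (ε * K.prod - ε' * K'.prod) * π = 0 := by
        rw [sub_mul, ← hβ1, ← hβ2, sub_self]
      have hN0 : Quaternion.normSq (ε * K.prod - ε' * K'.prod) * (p:ℤ) = 0 := by
        rw [← Pset_normSq hπP, ← map_mul, hsub, map_zero]
      have hpne : (p:ℤ) ≠ 0 := by exact_mod_cast hp.ne_zero
      have := (mul_eq_zero.mp hN0).resolve_right hpne
      have := (normSq_eq_zero_iff _).mp this
      exact sub_eq_zero.mp this
    have hKlen : K.length = k := by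
      rw [List.length_append, List.length_singleton] at hlen; omega
    have hK'len : K'.length = k := by
      rw [List.length_append, List.length_singleton] at hlen'; omega
    have hNK : Quaternion.normSq (ε * K.prod) = (p:ℤ)^k := by
      rw [normSq_unit_list_prod hp ε hε K hKP, hKlen]
    have hcK : content (ε * K.prod) = 1 := content_eq_one_of_pow p hp k _ hNK hγn
    obtain ⟨hee, hKK⟩ := IH (ε * K.prod) hcK ε K ε' K'
      ⟨hε, hKlen, hKP, hchK, rfl⟩ ⟨hε', hK'len, hK'P, hchK', hγγ⟩
    exact ⟨hee, by rw [hKK]⟩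
end Main



/-- unique factorization of integral quaternions of norm `p^k`. -/
theorem stmt_5 (p : ℕ) (hp : p.Prime) (hodd : Odd p) (k l : ℕ) (α : ℍ[ℤ]) (hα : α ≠ 0)
    (hN : Quaternion.normSq α = (p : ℤ) ^ k) (hc : content α = p ^ l) :
    ∃! εL : ℍ[ℤ] × List ℍ[ℤ],
      εL.1 ∈ quatUnits ∧
      εL.2.length = k - 2 * l ∧
      (∀ π ∈ εL.2, π ∈ Pset p) ∧
      List.Chain' (fun a b : ℍ[ℤ] =>
        (star b ∈ Pset p → a ≠ star b) ∧ (star b ∉ Pset p → a ≠ b)) εL.2 ∧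
      α = ((p : ℍ[ℤ]) ^ l) * εL.1 * εL.2.prod := by
  haveI : Fact p.Prime := ⟨hp⟩
  haveI : NeZero p := ⟨hp.ne_zero⟩
  obtain ⟨⟨b1, hb1⟩, ⟨b2, hb2⟩, ⟨b3, hb3⟩, ⟨b4, hb4⟩⟩ :=
    (dvd_content_iff (p^l) α).mp (hc ▸ dvd_rfl)
  set β : ℍ[ℤ] := qmk b1 b2 b3 b4 with hβdef
  have hαβ : α = ((p^l : ℕ):ℍ[ℤ]) * β := by
    rw [hβdef]
    ext <;> simp only [Quaternion.re_mul, Quaternion.imI_mul, Quaternion.imJ_mul,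
      Quaternion.imK_mul, Quaternion.re_natCast, Quaternion.imI_natCast,
      Quaternion.imJ_natCast, Quaternion.imK_natCast]
    · show α.re = ((p^l : ℕ):ℤ) * b1 - 0*b2 - 0*b3 - 0*b4
      rw [hb1]; push_cast; ring
    · show α.imI = ((p^l : ℕ):ℤ) * b2 + 0*b1 + 0*b4 - 0*b3
      rw [hb2]; push_cast; ring
    · show α.imJ = ((p^l : ℕ):ℤ) * b3 - 0*b4 + 0*b1 + 0*b2
      rw [hb3]; push_cast; ring
    · show α.imK = ((p^l : ℕ):ℤ) * b4 + 0*b3 - 0*b2 + 0*b1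
      rw [hb4]; push_cast; ring
  have hNα : Quaternion.normSq α = ((p:ℤ))^(2*l) * Quaternion.normSq β := by
    rw [hαβ, map_mul, normSq_natCast_sq]
    push_cast
    ring
  have hβ0 : β ≠ 0 := by
    intro h
    apply hα
    rw [hαβ, h, mul_zero]
  have hNβne : Quaternion.normSq β ≠ 0 := fun h => hβ0 ((normSq_eq_zero_iff β).mp h)
  have hNβnn : 0 ≤ Quaternion.normSq β := by
    rw [Quaternion.normSq_def']
    positivity
  have hpZ1 : (1:ℤ) < (p:ℤ) := by exact_mod_cast hp.one_lt
  have hkl : 2*l ≤ k := by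
    by_contra hlt
    push_neg at hlt
    have h1 : (p:ℤ)^k = (p:ℤ)^(2*l) * Quaternion.normSq β := by rw [← hN, hNα]
    have hNβ1 : 1 ≤ Quaternion.normSq β := by omega
    have h2 : (p:ℤ)^(2*l) ≤ (p:ℤ)^k := by
      nlinarith [pow_pos (show (0:ℤ) < (p:ℤ) by linarith) (2*l),
        pow_pos (show (0:ℤ) < (p:ℤ) by linarith) k]
    have h3 : (p:ℤ)^k < (p:ℤ)^(2*l) := pow_lt_pow_right₀ hpZ1 hlt
    linarith
  have hNβ : Quaternion.normSq β = (p:ℤ)^(k - 2*l) := by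
    have hsum : 2*l + (k - 2*l) = k := by omega
    have h1 : (p:ℤ)^(2*l) * Quaternion.normSq β = (p:ℤ)^(2*l) * (p:ℤ)^(k-2*l) := by
      rw [← hNα, hN, ← pow_add, hsum]
    exact mul_left_cancel₀ (pow_ne_zero _ (Int.natCast_ne_zero.mpr hp.ne_zero)) h1
  have hcβ : content β = 1 := by
    have hceq : content α = p^l * content β := by
      unfold content
      rw [hb1, hb2, hb3, hb4]
      show Int.gcd (Int.gcd (((p^l:ℕ):ℤ)*b1) (((p^l:ℕ):ℤ)*b2))
          (Int.gcd (((p^l:ℕ):ℤ)*b3) (((p^l:ℕ):ℤ)*b4))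
        = p^l * Int.gcd (Int.gcd b1 b2) (Int.gcd b3 b4)
      rw [Int.gcd_mul_left, Int.gcd_mul_left]
      rw [Int.gcd_natCast_natCast]
      rw [Nat.gcd_mul_left]
      rw [Int.natAbs_natCast, Int.gcd_natCast_natCast]
    rw [hc] at hceq
    have := Nat.eq_of_mul_eq_mul_left (pow_pos hp.pos l)
      (show p^l * 1 = p^l * content β by rw [mul_one]; exact hceq)
    omega
  obtain ⟨ε, L, hε, hlen, hLP, hchain, hβfac⟩ := exists_fac hp hodd (k - 2*l) β hcβ hNβ
  have hcastp : ((p:ℍ[ℤ]))^l = ((p^l:ℕ):ℍ[ℤ]) := by push_cast; ring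
  refine ⟨(ε, L), ⟨hε, hlen, hLP, hchain, ?_⟩, ?_⟩
  · show α = ((p:ℍ[ℤ])^l) * ε * L.prod
    rw [hcastp, hαβ, hβfac, ← mul_assoc]
  · rintro ⟨ε', L'⟩ ⟨hε', hlen', hLP', hchain', hα'⟩
    have hβ' : β = ε' * L'.prod := by
      apply natCast_mul_cancel (show p^l ≠ 0 from (pow_pos hp.pos l).ne')
      rw [← hαβ]
      show α = ((p^l:ℕ):ℍ[ℤ]) * (ε' * L'.prod)
      rw [← hcastp, ← mul_assoc]
      exact hα'
    obtain ⟨he, hL⟩ := unique_fac hp hodd (k - 2*l) β hcβ ε' L' ε L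
      ⟨hε', hlen', hLP', hchain', hβ'⟩ ⟨hε, hlen, hLP, hchain, hβfac⟩
    exact Prod.ext he hL
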